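/- arXiv:1106.4454 — 7 statements merged into one kernel-verified Lean document; each statement's English description precedes it below -/
import Mathlib

section
/- Let T be a tournament on a finite vertex set, let k be a nonnegative integer, let A' be a DESC-set of T with |A'| ≤ k, and let T' = T − A'. Fix a linear order ≻ on the strong components of T' such that whenever some arc of T' goes from a vertex of a strong component A to a vertex of a strong component B ≠ A, then A ≻ B. Let A and B be strong components of T' with A ≻ B, and let W be the set of all vertices lying in strong components C of T' with A ≻ C ≻ B. Then for every vertex a of A and every vertex b of B, the out-degrees in T satisfy d⁺_T(a) − d⁺_T(b) ≥ (|A| + |B|)/2 + |W| − (k + 1). -/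
/-!
Digraphs on a finite vertex type `V` are modelled by their arc sets
`D : Finset (V × V)`, where `(x, y) ∈ D` means there is an arc from `x` to `y`.
-/

namespace DescPaper

variable {V : Type*} [Fintype V] [DecidableEq V]

/-- The out-degree of `x` in the digraph `D`. -/
def outDeg (D : Finset (V × V)) (x : V) : ℕ :=
  (D.filter (fun a => a.1 = x)).card

/-- The in-degree of `x` in the digraph `D`. -/
def inDeg (D : Finset (V × V)) (x : V) : ℕ :=
  (D.filter (fun a => a.2 = x)).card

/-- The number of arcs of `D` from `x` to a vertex of `Y`. -/
def outDegInto (D : Finset (V × V)) (x : V) (Y : Finset V) : ℕ :=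
  (D.filter (fun a => a.1 = x ∧ a.2 ∈ Y)).card

/-- The subgraph of `D` induced by the vertex set `X`. -/
def induce (D : Finset (V × V)) (X : Finset V) : Finset (V × V) :=
  D.filter (fun a => a.1 ∈ X ∧ a.2 ∈ X)

/-- Reachability by a directed path in the digraph `D`. -/
def Reach (D : Finset (V × V)) : V → V → Prop :=
  Relation.ReflTransGen (fun u v => (u, v) ∈ D)

/-- The subgraph of `D` induced by `X` is strongly connected. -/
def StronglyConnectedOn (D : Finset (V × V)) (X : Finset V) : Prop :=
  ∀ x ∈ X, ∀ y ∈ X, Reach (induce D X) x y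

/-- `X` is the vertex set of a strong component of `D`:
a maximal (nonempty) vertex set inducing a strongly connected subgraph. -/
def IsStrongComponent (D : Finset (V × V)) (X : Finset V) : Prop :=
  X.Nonempty ∧ StronglyConnectedOn D X ∧
    ∀ Y : Finset V, X ⊆ Y → StronglyConnectedOn D Y → Y = X

/-- The digraph `D` is balanced: every vertex has equal in- and out-degree. -/
def IsBalanced (D : Finset (V × V)) : Prop :=
  ∀ x : V, outDeg D x = inDeg D x

/-- The subgraph of `D` induced by `X` is Eulerian:
strongly connected and balanced. -/
def EulerianOn (D : Finset (V × V)) (X : Finset V) : Prop :=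
  StronglyConnectedOn D X ∧ IsBalanced (induce D X)

/-- `A'` is a DESC-set of `D`: a set of arcs of `D` such that every strong
component of `D - A'` is Eulerian. -/
def IsDESC (D A' : Finset (V × V)) : Prop :=
  A' ⊆ D ∧ ∀ X : Finset V, IsStrongComponent (D \ A') X → EulerianOn (D \ A') X

/-- `desc D` is the minimum size of a DESC-set of `D`. -/
noncomputable def desc (D : Finset (V × V)) : ℕ :=
  sInf {n | ∃ A' : Finset (V × V), IsDESC D A' ∧ A'.card = n}

/-- `T` is a tournament: no loops, and for every pair of distinct vertices
exactly one of the two possible arcs is present. -/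
def IsTournament (T : Finset (V × V)) : Prop :=
  (∀ x : V, (x, x) ∉ T) ∧ ∀ x y : V, x ≠ y → ((x, y) ∈ T ↔ (y, x) ∉ T)

/-- `dstar A' X Y` is the number of arcs of `A'` with one endpoint in `X`
and the other endpoint in `Y` (in either direction). -/
def dstar (A' : Finset (V × V)) (X Y : Finset V) : ℕ :=
  (A'.filter (fun a => (a.1 ∈ X ∧ a.2 ∈ Y) ∨ (a.1 ∈ Y ∧ a.2 ∈ X))).card

end DescPaper

namespace DescPaper

section Aux

variable {V : Type*} [Fintype V] [DecidableEq V]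

open Finset

/-- indicator -/
def ind (p : Prop) [Decidable p] : ℕ := if p then 1 else 0

lemma ind_le_one (p : Prop) [Decidable p] : ind p ≤ 1 := by
  unfold ind; split <;> omega

lemma ind_pos {p : Prop} [Decidable p] (h : p) : ind p = 1 := if_pos h

lemma ind_neg {p : Prop} [Decidable p] (h : ¬ p) : ind p = 0 := if_neg h

lemma ind_mono {p q : Prop} [Decidable p] [Decidable q] (h : p → q) : ind p ≤ ind q := by
  unfold ind
  by_cases hp : p
  · rw [if_pos hp, if_pos (h hp)]
  · rw [if_neg hp]; omega

lemma card_filter_eq_sum_ind {α : Type*} (s : Finset α) (p : α → Prop) [DecidablePred p] :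
    (s.filter p).card = ∑ v ∈ s, ind (p v) :=
  Finset.card_filter p s

omit [Fintype V] in
lemma myOutDeg_induce (D : Finset (V × V)) (X : Finset V) (x : V) (hx : x ∈ X) :
    outDeg (induce D X) x = (X.filter fun v => (x, v) ∈ D).card := by
  unfold outDeg induce
  apply Finset.card_bij (fun p _ => p.2)
  · intro p hp
    simp only [mem_filter, Finset.filter_filter] at hp ⊢
    obtain ⟨hpD, ⟨h1, h2⟩, hfst⟩ := hp
    refine ⟨h2, ?_⟩
    have hpe : p = (x, p.2) := by rw [← hfst]
    rwa [hpe] at hpD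
  · intro p hp q hq h
    simp only [mem_filter, Finset.filter_filter] at hp hq
    exact Prod.ext (hp.2.2.trans hq.2.2.symm) h
  · intro v hv
    simp only [mem_filter] at hv
    exact ⟨(x, v), by simp [hv.2, hx, hv.1], rfl⟩

omit [Fintype V] in
lemma myInDeg_induce (D : Finset (V × V)) (X : Finset V) (x : V) (hx : x ∈ X) :
    inDeg (induce D X) x = (X.filter fun v => (v, x) ∈ D).card := by
  unfold inDeg induce
  apply Finset.card_bij (fun p _ => p.1)
  · intro p hp
    simp only [mem_filter, Finset.filter_filter] at hp ⊢
    obtain ⟨hpD, ⟨h1, h2⟩, hsnd⟩ := hp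
    refine ⟨h1, ?_⟩
    have hpe : p = (p.1, x) := by rw [← hsnd]
    rwa [hpe] at hpD
  · intro p hp q hq h
    simp only [mem_filter, Finset.filter_filter] at hp hq
    exact Prod.ext h (hp.2.2.trans hq.2.2.symm)
  · intro v hv
    simp only [mem_filter] at hv
    exact ⟨(v, x), by simp [hv.2, hx, hv.1], rfl⟩

lemma induce_univ (D : Finset (V × V)) : induce D univ = D := by
  unfold induce; simp

lemma myOutDeg_eq (D : Finset (V × V)) (x : V) :
    outDeg D x = ∑ v ∈ univ, ind ((x, v) ∈ D) := by
  have h := myOutDeg_induce D univ x (mem_univ x)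
  rw [induce_univ] at h
  rw [h, card_filter_eq_sum_ind]

omit [Fintype V] in
lemma reach_mono (D : Finset (V × V)) {X Y : Finset V} (hXY : X ⊆ Y) {x y : V}
    (h : Reach (induce D X) x y) : Reach (induce D Y) x y := by
  refine Relation.ReflTransGen.mono (fun u w huw => ?_) _ _ h
  unfold induce at huw ⊢
  simp only [mem_filter] at huw ⊢
  exact ⟨huw.1, hXY huw.2.1, hXY huw.2.2⟩

omit [Fintype V] in
lemma sc_disjoint (D : Finset (V × V)) {X Y : Finset V}
    (hX : IsStrongComponent D X) (hY : IsStrongComponent D Y) (hne : X ≠ Y) :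
    Disjoint X Y := by
  rw [Finset.disjoint_left]
  intro v hvX hvY
  have hsc : StronglyConnectedOn D (X ∪ Y) := by
    intro x hx y hy
    have hxv : ∀ z ∈ X ∪ Y, Reach (induce D (X ∪ Y)) z v := by
      intro z hz
      rcases Finset.mem_union.mp hz with h | h
      · exact reach_mono D Finset.subset_union_left (hX.2.1 z h v hvX)
      · exact reach_mono D Finset.subset_union_right (hY.2.1 z h v hvY)
    have hvy : ∀ z ∈ X ∪ Y, Reach (induce D (X ∪ Y)) v z := by
      intro z hz
      rcases Finset.mem_union.mp hz with h | h
      · exact reach_mono D Finset.subset_union_left (hX.2.1 v hvX z h)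
      · exact reach_mono D Finset.subset_union_right (hY.2.1 v hvY z h)
    exact (hxv x hx).trans (hvy y hy)
  have h1 := hX.2.2 (X ∪ Y) Finset.subset_union_left hsc
  have h2 := hY.2.2 (X ∪ Y) Finset.subset_union_right hsc
  exact hne (h1.symm.trans h2)

lemma sc_exists (D : Finset (V × V)) (v : V) :
    ∃ C : Finset V, IsStrongComponent D C ∧ v ∈ C := by
  have hsingle : StronglyConnectedOn D {v} := by
    intro x hx y hy
    simp only [Finset.mem_singleton] at hx hy
    subst hx; subst hy
    exact Relation.ReflTransGen.refl
  obtain ⟨M, hM, hmax⟩ := Set.Finite.exists_maximalFor id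
    {X : Finset V | v ∈ X ∧ StronglyConnectedOn D X} (Set.toFinite _)
    ⟨{v}, Finset.mem_singleton_self v, hsingle⟩
  exact ⟨M, ⟨⟨v, hM.1⟩, hM.2, fun Y hMY hY => Finset.Subset.antisymm (hmax ⟨hMY hM.1, hY⟩ hMY) hMY⟩, hM.1⟩

end Aux

end DescPaper

open DescPaper

/-- Lemma 1 of the paper. -/
theorem stmt0 {V : Type*} [Fintype V] [DecidableEq V]
    (T A' : Finset (V × V)) (k : ℕ)
    (hT : IsTournament T) (hDESC : IsDESC T A') (hk : A'.card ≤ k)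
    (ord : Finset V → Finset V → Prop)
    (hirr : ∀ C : Finset V, IsStrongComponent (T \ A') C → ¬ ord C C)
    (htrans : ∀ C₁ C₂ C₃ : Finset V, IsStrongComponent (T \ A') C₁ →
      IsStrongComponent (T \ A') C₂ → IsStrongComponent (T \ A') C₃ →
      ord C₁ C₂ → ord C₂ C₃ → ord C₁ C₃)
    (htotal : ∀ C₁ C₂ : Finset V, IsStrongComponent (T \ A') C₁ →
      IsStrongComponent (T \ A') C₂ → C₁ ≠ C₂ → ord C₁ C₂ ∨ ord C₂ C₁)
    (hcompat : ∀ C₁ C₂ : Finset V, IsStrongComponent (T \ A') C₁ →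
      IsStrongComponent (T \ A') C₂ → C₁ ≠ C₂ →
      (∃ u ∈ C₁, ∃ v ∈ C₂, (u, v) ∈ T \ A') → ord C₁ C₂)
    (A B : Finset V)
    (hA : IsStrongComponent (T \ A') A) (hB : IsStrongComponent (T \ A') B)
    (hAB : ord A B)
    (W : Finset V)
    (hW : ∀ v : V, v ∈ W ↔
      ∃ C : Finset V, IsStrongComponent (T \ A') C ∧ v ∈ C ∧ ord A C ∧ ord C B) :
    ∀ a ∈ A, ∀ b ∈ B,
      ((A.card : ℚ) + B.card) / 2 + W.card - (k + 1)
        ≤ (outDeg T a : ℚ) - outDeg T b := by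
  
  obtain ⟨hA'T, hEuler⟩ := hDESC
  have hno : ∀ x : V, (x, x) ∉ T := hT.1
  have hnb : ∀ x y : V, (x, y) ∈ T → (y, x) ∈ T → False := by
    intro x y h1 h2
    by_cases hxy : x = y
    · subst hxy; exact hno x h1
    · exact ((hT.2 x y hxy).mp h1) h2
  have hone : ∀ x y : V, x ≠ y → (x, y) ∉ T → (y, x) ∈ T := by
    intro x y hxy h
    by_contra h2
    exact h2 ((hT.2 y x (Ne.symm hxy)).mpr h)
  have huniq : ∀ (C₁ C₂ : Finset V) (v : V), IsStrongComponent (T \ A') C₁ →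
      IsStrongComponent (T \ A') C₂ → v ∈ C₁ → v ∈ C₂ → C₁ = C₂ := by
    intro C₁ C₂ v h1 h2 hv1 hv2
    by_contra hne
    exact Finset.disjoint_left.mp (sc_disjoint _ h1 h2 hne) hv1 hv2
  have hAneB : A ≠ B := by
    intro h; subst h; exact hirr A hA hAB
  have hdAB : Disjoint A B := sc_disjoint _ hA hB hAneB
  intro a ha b hb
  have haB : a ∉ B := fun h => Finset.disjoint_left.mp hdAB ha h
  have hbA : b ∉ A := fun h => Finset.disjoint_left.mp hdAB h hb
  have hab : a ≠ b := fun h => haB (h ▸ hb)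
  -- facts about W
  have hWA : ∀ v ∈ W, v ∉ A := by
    intro v hv hvA
    obtain ⟨C, hC, hvC, hAC, hCB⟩ := (hW v).mp hv
    have hCA : C = A := huniq C A v hC hA hvC hvA
    rw [hCA] at hAC
    exact hirr A hA hAC
  have hWB : ∀ v ∈ W, v ∉ B := by
    intro v hv hvB
    obtain ⟨C, hC, hvC, hAC, hCB⟩ := (hW v).mp hv
    have hCB' : C = B := huniq C B v hC hB hvC hvB
    rw [hCB'] at hCB
    exact hirr B hB hCB
  -- the two basic claims
  have claimA : ∀ v : V, v ∉ A →
      (∀ C : Finset V, IsStrongComponent (T \ A') C → v ∈ C → ord C A → False) →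
      ((a, v) ∈ T ∨ (v, a) ∈ A') := by
    intro v hvA hnotup
    by_cases h : (a, v) ∈ T
    · exact Or.inl h
    right
    have hvne : v ≠ a := fun h' => hvA (h' ▸ ha)
    have hvaT : (v, a) ∈ T := hone a v (Ne.symm hvne) h
    by_contra hA'mem
    obtain ⟨C, hC, hvC⟩ := sc_exists (T \ A') v
    have hCA : C ≠ A := fun h' => hvA (h' ▸ hvC)
    exact hnotup C hC hvC
      (hcompat C A hC hA hCA ⟨v, hvC, a, ha, Finset.mem_sdiff.mpr ⟨hvaT, hA'mem⟩⟩)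
  have claimB : ∀ v : V, v ∉ B →
      (∀ C : Finset V, IsStrongComponent (T \ A') C → v ∈ C → ord B C → False) →
      ((v, b) ∈ T ∨ (b, v) ∈ A') := by
    intro v hvB hnotdn
    by_cases h : (v, b) ∈ T
    · exact Or.inl h
    right
    have hvne : v ≠ b := fun h' => hvB (h' ▸ hb)
    have hbvT : (b, v) ∈ T := hone v b hvne h
    by_contra hA'mem
    obtain ⟨C, hC, hvC⟩ := sc_exists (T \ A') v
    have hBC : B ≠ C := by
      intro h'
      rw [← h'] at hvC
      exact hvB hvC
    exact hnotdn C hC hvC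
      (hcompat B C hB hC hBC ⟨b, hb, v, hvC, Finset.mem_sdiff.mpr ⟨hbvT, hA'mem⟩⟩)
  set Z : Finset V := Finset.univ \ (A ∪ B ∪ W) with hZdef
  -- pointwise inequalities
  have pA : ∀ v ∈ A, 1 ≤ ind (v = a) + ind ((a, v) ∈ T \ A') + ind ((v, a) ∈ T \ A')
      + ind ((a, v) ∈ A' ∨ (v, a) ∈ A') := by
    intro v hvA
    by_cases hva : v = a
    · have := ind_pos hva; omega
    by_cases he : (a, v) ∈ A' ∨ (v, a) ∈ A'
    · have := ind_pos he; omega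
    push_neg at he
    by_cases hav : (a, v) ∈ T
    · have := ind_pos (Finset.mem_sdiff.mpr ⟨hav, he.1⟩); omega
    · have hvaT : (v, a) ∈ T := hone a v (Ne.symm hva) hav
      have := ind_pos (Finset.mem_sdiff.mpr ⟨hvaT, he.2⟩); omega
  have pA' : ∀ v ∈ A, ind ((b, v) ∈ T) ≤ ind ((b, v) ∈ A') := by
    intro v hvA
    have hvB : v ∉ B := fun h => Finset.disjoint_left.mp hdAB hvA h
    have hgb := claimB v hvB (fun C' hC' hvC' hBC' => by
      have hCC : C' = A := huniq C' A v hC' hA hvC' hvA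
      rw [hCC] at hBC'
      exact hirr B hB (htrans B A B hB hA hB hBC' hAB))
    rcases hgb with h | h
    · have := ind_neg (fun hbv => hnb b v hbv h); omega
    · have := ind_pos h; have := ind_le_one ((b, v) ∈ T); omega
  have pB : ∀ v ∈ B, 1 ≤ ind ((a, v) ∈ T) + ind ((v, a) ∈ A') := by
    intro v hvB
    have hvA : v ∉ A := fun h => Finset.disjoint_left.mp hdAB h hvB
    have hfa := claimA v hvA (fun C' hC' hvC' hC'A => by
      have hCC : C' = B := huniq C' B v hC' hB hvC' hvB
      rw [hCC] at hC'A
      exact hirr A hA (htrans A B A hA hB hA hAB hC'A))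
    rcases hfa with h | h
    · have := ind_pos h; omega
    · have := ind_pos h; omega
  have pB2 : ∀ v ∈ B, ind ((b, v) ∈ T) ≤ ind ((b, v) ∈ T \ A') + ind ((b, v) ∈ A') := by
    intro v hvB
    by_cases hbv : (b, v) ∈ T
    · by_cases hbv' : (b, v) ∈ A'
      · have := ind_pos hbv'; have := ind_le_one ((b, v) ∈ T); omega
      · have := ind_pos (Finset.mem_sdiff.mpr ⟨hbv, hbv'⟩)
        have := ind_le_one ((b, v) ∈ T); omega
    · have := ind_neg hbv; omega
  have pB3 : ∀ v ∈ B.erase b,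
      ind ((b, v) ∈ T \ A') + ind ((v, b) ∈ T \ A') ≤ 1 := by
    intro v hv
    by_cases h1 : (b, v) ∈ T \ A'
    · by_cases h2 : (v, b) ∈ T \ A'
      · exact absurd ((Finset.mem_sdiff.mp h2).1) (fun hh => hnb b v (Finset.mem_sdiff.mp h1).1 hh)
      · have := ind_pos h1; have := ind_neg h2; omega
    · have := ind_neg h1; have := ind_le_one ((v, b) ∈ T \ A'); omega
  have pW : ∀ v ∈ W, 1 + ind ((b, v) ∈ T) ≤ ind ((a, v) ∈ T) + ind ((v, a) ∈ A')
      + ind ((b, v) ∈ A') := by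
    intro v hvW
    obtain ⟨C, hC, hvC, hAC, hCB⟩ := (hW v).mp hvW
    have hfa := claimA v (hWA v hvW) (fun C' hC' hvC' hC'A => by
      have hCC : C' = C := huniq C' C v hC' hC hvC' hvC
      rw [hCC] at hC'A
      exact hirr C hC (htrans C A C hC hA hC hC'A hAC))
    have hgb := claimB v (hWB v hvW) (fun C' hC' hvC' hBC' => by
      have hCC : C' = C := huniq C' C v hC' hC hvC' hvC
      rw [hCC] at hBC'
      exact hirr B hB (htrans B C B hB hC hB hBC' hCB))
    rcases hfa with h | h <;> rcases hgb with h' | h'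
    · have := ind_pos h
      have := ind_neg (fun hbv => hnb b v hbv h')
      omega
    · have := ind_pos h; have := ind_pos h'; have := ind_le_one ((b, v) ∈ T); omega
    · have := ind_pos h
      have := ind_neg (fun hbv => hnb b v hbv h')
      omega
    · have := ind_pos h; have := ind_pos h'; have := ind_le_one ((b, v) ∈ T); omega
  have pZ : ∀ v ∈ Z, ind ((b, v) ∈ T) ≤ ind ((a, v) ∈ T) + ind ((v, a) ∈ A')
      + ind ((b, v) ∈ A') := by
    intro v hvZ
    rw [hZdef] at hvZ
    simp only [Finset.mem_sdiff, Finset.mem_union, Finset.mem_univ, true_and, not_or] at hvZ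
    obtain ⟨⟨hvA, hvB⟩, hvW⟩ := hvZ
    by_cases hbv : (b, v) ∈ T
    · by_cases hbv' : (b, v) ∈ A'
      · have := ind_pos hbv'; have := ind_le_one ((b, v) ∈ T); omega
      obtain ⟨C, hC, hvC⟩ := sc_exists (T \ A') v
      have hBC : B ≠ C := by
        intro h'
        rw [← h'] at hvC
        exact hvB hvC
      have hordBC : ord B C := hcompat B C hB hC hBC
        ⟨b, hb, v, hvC, Finset.mem_sdiff.mpr ⟨hbv, hbv'⟩⟩
      have hfa := claimA v hvA (fun C' hC' hvC' hC'A => by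
        have hCC : C' = C := huniq C' C v hC' hC hvC' hvC
        rw [hCC] at hC'A
        have h1 : ord C B := htrans C A B hC hA hB hC'A hAB
        exact hirr C hC (htrans C B C hC hB hC h1 hordBC))
      rcases hfa with h | h
      · have := ind_pos h; have := ind_le_one ((b, v) ∈ T); omega
      · have := ind_pos h; have := ind_le_one ((b, v) ∈ T); omega
    · have := ind_neg hbv; omega
  -- balance facts from the DESC property
  have hbalA : ∑ v ∈ A, ind ((a, v) ∈ T \ A') = ∑ v ∈ A, ind ((v, a) ∈ T \ A') := by
    rw [← card_filter_eq_sum_ind, ← card_filter_eq_sum_ind,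
      ← myOutDeg_induce (T \ A') A a ha, ← myInDeg_induce (T \ A') A a ha]
    exact (hEuler A hA).2 a
  have hbalB : ∑ v ∈ B, ind ((b, v) ∈ T \ A') = ∑ v ∈ B, ind ((v, b) ∈ T \ A') := by
    rw [← card_filter_eq_sum_ind, ← card_filter_eq_sum_ind,
      ← myOutDeg_induce (T \ A') B b hb, ← myInDeg_induce (T \ A') B b hb]
    exact (hEuler B hB).2 b
  -- piece inequalities
  have h1 : A.card ≤ 1 + 2 * ∑ v ∈ A, ind ((a, v) ∈ T)
      + ∑ v ∈ A, ind ((a, v) ∈ A' ∨ (v, a) ∈ A') := by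
    have s0 : ∑ v ∈ A, (1 : ℕ) ≤ ∑ v ∈ A, (ind (v = a) + ind ((a, v) ∈ T \ A')
        + ind ((v, a) ∈ T \ A') + ind ((a, v) ∈ A' ∨ (v, a) ∈ A')) := Finset.sum_le_sum pA
    rw [Finset.sum_add_distrib, Finset.sum_add_distrib, Finset.sum_add_distrib,
      Finset.sum_const, smul_eq_mul, mul_one] at s0
    have s1 : ∑ v ∈ A, ind (v = a) = 1 := by
      simp [ind, ha]
    have s2 : ∑ v ∈ A, ind ((a, v) ∈ T \ A') ≤ ∑ v ∈ A, ind ((a, v) ∈ T) :=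
      Finset.sum_le_sum (fun v _ => ind_mono (fun h => (Finset.mem_sdiff.mp h).1))
    omega
  have h2 : B.card ≤ ∑ v ∈ B, ind ((a, v) ∈ T) + ∑ v ∈ B, ind ((v, a) ∈ A') := by
    have s0 : ∑ v ∈ B, (1 : ℕ) ≤ ∑ v ∈ B, (ind ((a, v) ∈ T) + ind ((v, a) ∈ A')) :=
      Finset.sum_le_sum pB
    rwa [Finset.sum_add_distrib, Finset.sum_const, smul_eq_mul, mul_one] at s0
  have h3 : 2 * ∑ v ∈ B, ind ((b, v) ∈ T) + 1 ≤ B.card + 2 * ∑ v ∈ B, ind ((b, v) ∈ A') := by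
    have s0 : ∑ v ∈ B, ind ((b, v) ∈ T) ≤ ∑ v ∈ B, ind ((b, v) ∈ T \ A')
        + ∑ v ∈ B, ind ((b, v) ∈ A') := by
      have := Finset.sum_le_sum pB2
      rwa [Finset.sum_add_distrib] at this
    have s1 : ∑ v ∈ B.erase b, (ind ((b, v) ∈ T \ A') + ind ((v, b) ∈ T \ A'))
        ≤ (B.erase b).card := by
      calc ∑ v ∈ B.erase b, (ind ((b, v) ∈ T \ A') + ind ((v, b) ∈ T \ A'))
          ≤ ∑ _v ∈ B.erase b, 1 := Finset.sum_le_sum pB3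
        _ = (B.erase b).card := by simp
    have e := Finset.sum_erase_add B
      (fun v => ind ((b, v) ∈ T \ A') + ind ((v, b) ∈ T \ A')) hb
    have z1 : ind ((b, b) ∈ T \ A') = 0 := ind_neg (fun h => hno b (Finset.mem_sdiff.mp h).1)
    have s3 : (B.erase b).card + 1 = B.card := Finset.card_erase_add_one hb
    have s4 : ∑ v ∈ B, (ind ((b, v) ∈ T \ A') + ind ((v, b) ∈ T \ A'))
        = ∑ v ∈ B, ind ((b, v) ∈ T \ A') + ∑ v ∈ B, ind ((v, b) ∈ T \ A') :=
      Finset.sum_add_distrib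
    omega
  have h4 : W.card + ∑ v ∈ W, ind ((b, v) ∈ T) ≤ ∑ v ∈ W, ind ((a, v) ∈ T)
      + ∑ v ∈ W, ind ((v, a) ∈ A') + ∑ v ∈ W, ind ((b, v) ∈ A') := by
    have s0 := Finset.sum_le_sum pW
    rwa [Finset.sum_add_distrib, Finset.sum_add_distrib, Finset.sum_add_distrib,
      Finset.sum_const, smul_eq_mul, mul_one] at s0
  have h5 : ∑ v ∈ Z, ind ((b, v) ∈ T) ≤ ∑ v ∈ Z, ind ((a, v) ∈ T)
      + ∑ v ∈ Z, ind ((v, a) ∈ A') + ∑ v ∈ Z, ind ((b, v) ∈ A') := by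
    have s0 := Finset.sum_le_sum pZ
    rwa [Finset.sum_add_distrib, Finset.sum_add_distrib] at s0
  have h6 : ∑ v ∈ A, ind ((b, v) ∈ T) ≤ ∑ v ∈ A, ind ((b, v) ∈ A') :=
    Finset.sum_le_sum pA'
  -- splitting the universe
  have hdAW : Disjoint A W := Finset.disjoint_right.mpr (fun v hv => hWA v hv)
  have hdBW : Disjoint B W := Finset.disjoint_right.mpr (fun v hv => hWB v hv)
  have hdUZ : Disjoint (A ∪ B ∪ W) Z := by
    rw [hZdef]; exact Finset.disjoint_sdiff
  have hABW : Disjoint (A ∪ B) W := Finset.disjoint_union_left.mpr ⟨hdAW, hdBW⟩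
  have hsplit : ∀ h : V → ℕ, ∑ v ∈ Finset.univ, h v =
      ∑ v ∈ A, h v + ∑ v ∈ B, h v + ∑ v ∈ W, h v + ∑ v ∈ Z, h v := by
    intro h
    have e2 : ∑ v ∈ (A ∪ B ∪ W) ∪ Z, h v = ∑ v ∈ A ∪ B ∪ W, h v + ∑ v ∈ Z, h v :=
      Finset.sum_union hdUZ
    have e3 : A ∪ B ∪ W ∪ Z = Finset.univ := by
      rw [hZdef]; exact Finset.union_sdiff_of_subset (Finset.subset_univ _)
    rw [← e3, e2, Finset.sum_union hABW, Finset.sum_union hdAB]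
  -- the three arc sets
  have h7 : ∑ v ∈ A, ind ((b, v) ∈ A') + ∑ v ∈ B, ind ((b, v) ∈ A')
      + ∑ v ∈ W, ind ((b, v) ∈ A') + ∑ v ∈ Z, ind ((b, v) ∈ A')
      ≤ (A'.filter (fun p => p.1 = b)).card := by
    have hs := hsplit (fun v => ind ((b, v) ∈ A'))
    have hcard : ∑ v ∈ Finset.univ, ind ((b, v) ∈ A')
        ≤ (A'.filter (fun p => p.1 = b)).card := by
      rw [← card_filter_eq_sum_ind]
      apply Finset.card_le_card_of_injOn (fun v => (b, v))
      · intro v hv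
        simp only [Finset.mem_coe, Finset.mem_filter, Finset.mem_univ, true_and] at hv
        exact Finset.mem_filter.mpr ⟨hv, rfl⟩
      · intro v _ w _ h
        exact ((Prod.mk.injEq _ _ _ _).mp h).2
    omega
  have h8 : ∑ v ∈ B, ind ((v, a) ∈ A') + ∑ v ∈ W, ind ((v, a) ∈ A')
      + ∑ v ∈ Z, ind ((v, a) ∈ A')
      ≤ (A'.filter (fun p => p.2 = a ∧ p.1 ∉ A)).card := by
    have hd2 : Disjoint (B ∪ W) Z :=
      Finset.disjoint_of_subset_left
        (by intro x hx; simp only [Finset.mem_union] at hx ⊢; tauto) hdUZ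
    rw [← Finset.sum_union hdBW, ← Finset.sum_union hd2, ← card_filter_eq_sum_ind]
    apply Finset.card_le_card_of_injOn (fun v => (v, a))
    · intro v hv
      simp only [Finset.mem_coe, Finset.mem_filter, Finset.mem_union] at hv
      obtain ⟨hvm, hva⟩ := hv
      refine Finset.mem_filter.mpr ⟨hva, rfl, ?_⟩
      rcases hvm with (h | h) | h
      · exact fun hA'' => Finset.disjoint_left.mp hdAB hA'' h
      · exact hWA v h
      · rw [hZdef] at h
        have h' := (Finset.mem_sdiff.mp h).2
        exact fun hA'' => h' (by simp [hA''])
    · intro v _ w _ h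
      exact ((Prod.mk.injEq _ _ _ _).mp h).1
  have h9 : ∑ v ∈ A, ind ((a, v) ∈ A' ∨ (v, a) ∈ A')
      ≤ (A'.filter (fun p => (p.1 = a ∧ p.2 ∈ A) ∨ (p.2 = a ∧ p.1 ∈ A))).card := by
    rw [← card_filter_eq_sum_ind]
    apply Finset.card_le_card_of_injOn (fun v => if (a, v) ∈ A' then (a, v) else (v, a))
    · intro v hv
      simp only [Finset.mem_coe, Finset.mem_filter] at hv
      obtain ⟨hvA, hor⟩ := hv
      show (if (a, v) ∈ A' then (a, v) else (v, a)) ∈ _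
      by_cases hcase : (a, v) ∈ A'
      · rw [if_pos hcase]
        exact Finset.mem_filter.mpr ⟨hcase, Or.inl ⟨rfl, hvA⟩⟩
      · have hva : (v, a) ∈ A' := hor.resolve_left hcase
        rw [if_neg hcase]
        exact Finset.mem_filter.mpr ⟨hva, Or.inr ⟨rfl, hvA⟩⟩
    · intro v _ w _ heq
      simp only at heq
      by_cases hc1 : (a, v) ∈ A' <;> by_cases hc2 : (a, w) ∈ A' <;>
        simp only [hc1, hc2, if_true, if_false, ite_true, ite_false, Prod.mk.injEq] at heq
      · exact heq.2
      · exact heq.2.trans heq.1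
      · exact heq.1.trans heq.2
      · exact heq.1
  have h10 : (A'.filter (fun p => p.1 = b)).card
      + (A'.filter (fun p => p.2 = a ∧ p.1 ∉ A)).card
      + (A'.filter (fun p => (p.1 = a ∧ p.2 ∈ A) ∨ (p.2 = a ∧ p.1 ∈ A))).card
      ≤ A'.card + 1 := by
    set S1 := A'.filter (fun p => p.1 = b) with hS1
    set S2 := A'.filter (fun p => p.2 = a ∧ p.1 ∉ A) with hS2
    set S3 := A'.filter (fun p => (p.1 = a ∧ p.2 ∈ A) ∨ (p.2 = a ∧ p.1 ∈ A)) with hS3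
    have hi : S1 ∩ S2 ⊆ {(b, a)} := by
      intro p hp
      rw [Finset.mem_inter, hS1, hS2] at hp
      simp only [Finset.mem_filter] at hp
      have : p = (b, a) := Prod.ext hp.1.2 hp.2.2.1
      simp [this]
    have c0 : (S1 ∩ S2).card ≤ 1 := le_trans (Finset.card_le_card hi) (by simp)
    have c1 : (S1 ∪ S2).card + (S1 ∩ S2).card = S1.card + S2.card :=
      Finset.card_union_add_card_inter S1 S2
    have hd3 : Disjoint (S1 ∪ S2) S3 := by
      rw [Finset.disjoint_left]
      intro p hp hp3
      rw [hS3] at hp3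
      simp only [Finset.mem_filter] at hp3
      rcases Finset.mem_union.mp hp with h | h
      · rw [hS1] at h
        simp only [Finset.mem_filter] at h
        rcases hp3.2 with ⟨he1, he2⟩ | ⟨he1, he2⟩
        · exact hab (he1.symm.trans h.2)
        · rw [h.2] at he2
          exact hbA he2
      · rw [hS2] at h
        simp only [Finset.mem_filter] at h
        rcases hp3.2 with ⟨he1, he2⟩ | ⟨he1, he2⟩
        · have hp' : p = (a, a) := Prod.ext he1 h.2.1
          rw [hp'] at hp3
          exact hno a (hA'T hp3.1)
        · exact h.2.2 he2
    have c2 : (S1 ∪ S2).card + S3.card = (S1 ∪ S2 ∪ S3).card :=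
      (Finset.card_union_of_disjoint hd3).symm
    have c3 : (S1 ∪ S2 ∪ S3).card ≤ A'.card := by
      apply Finset.card_le_card
      intro p hp
      rcases Finset.mem_union.mp hp with h | h
      · rcases Finset.mem_union.mp h with h' | h'
        · exact Finset.mem_filter.mp (hS1 ▸ h') |>.1
        · exact Finset.mem_filter.mp (hS2 ▸ h') |>.1
      · exact Finset.mem_filter.mp (hS3 ▸ h) |>.1
    omega
  -- out-degree decompositions
  have hda : outDeg T a = ∑ v ∈ A, ind ((a, v) ∈ T) + ∑ v ∈ B, ind ((a, v) ∈ T)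
      + ∑ v ∈ W, ind ((a, v) ∈ T) + ∑ v ∈ Z, ind ((a, v) ∈ T) := by
    rw [myOutDeg_eq]
    have hs := hsplit (fun v => ind ((a, v) ∈ T))
    simpa using hs
  have hdb : outDeg T b = ∑ v ∈ A, ind ((b, v) ∈ T) + ∑ v ∈ B, ind ((b, v) ∈ T)
      + ∑ v ∈ W, ind ((b, v) ∈ T) + ∑ v ∈ Z, ind ((b, v) ∈ T) := by
    rw [myOutDeg_eq]
    have hs := hsplit (fun v => ind ((b, v) ∈ T))
    simpa using hs
  -- the main natural-number inequality
  have main : A.card + B.card + 2 * W.card + 2 * outDeg T b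
      ≤ 2 * outDeg T a + 2 * k + 2 := by
    rw [hda, hdb]
    omega
  -- conclude over ℚ
  have mq : ((A.card + B.card + 2 * W.card + 2 * outDeg T b : ℕ) : ℚ)
      ≤ ((2 * outDeg T a + 2 * k + 2 : ℕ) : ℚ) := Nat.cast_le.mpr main
  push_cast at mq
  linarith
end

section
/- Let T be a tournament on a finite vertex set, let k be a nonnegative integer, let A' be a DESC-set of T with |A'| ≤ k, and let T' = T − A'. Suppose X is a set of vertices of T with |X| ≥ 4k + 3 such that max_{x∈X} d⁺_T(x) − min_{x∈X} d⁺_T(x) ≤ k. Then all vertices of X belong to one and the same strong component of T'. -/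
open DescPaper


section Aux

variable {V : Type*} [Fintype V] [DecidableEq V]

lemma reach_mono {D E : Finset (V × V)} (h : D ⊆ E) {a b : V} (hr : Reach D a b) :
    Reach E a b :=
  by unfold Reach at *; exact Relation.ReflTransGen.mono (fun _ _ huv => h huv) _ _ hr

open Finset in
lemma two_mul_induce_card {T : Finset (V × V)} (hT : IsTournament T) (P : Finset V) :
    2 * (induce T P).card = P.card * P.card - P.card := by
  classical
  have hdisj : Disjoint (induce T P) ((induce T P).image Prod.swap) := by
    rw [Finset.disjoint_left]
    rintro ⟨u, v⟩ h1 h2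
    simp only [induce, mem_image, mem_filter] at h1 h2
    obtain ⟨⟨a, b⟩, ⟨hab, _, _⟩, hswap⟩ := h2
    have hav : b = u ∧ a = v := by simpa [Prod.ext_iff] using hswap
    have hab' : (v, u) ∈ T := by rwa [hav.1, hav.2] at hab
    have huv : u ≠ v := by rintro rfl; exact hT.1 u h1.1
    exact ((hT.2 u v huv).1 h1.1) hab'
  have hunion : induce T P ∪ (induce T P).image Prod.swap = P.offDiag := by
    ext ⟨u, v⟩
    simp only [induce, mem_union, mem_image, mem_filter, Finset.mem_offDiag]
    constructor
    · rintro (⟨hT1, h1, h2⟩ | ⟨⟨a, b⟩, ⟨hab, ha, hb⟩, hswap⟩)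
      · refine ⟨h1, h2, ?_⟩; rintro rfl; exact hT.1 u hT1
      · have hav : b = u ∧ a = v := by simpa [Prod.ext_iff] using hswap
        have hab' : (v, u) ∈ T := by rwa [hav.1, hav.2] at hab
        refine ⟨hav.1 ▸ hb, hav.2 ▸ ha, ?_⟩; rintro rfl; exact hT.1 u hab'
    · rintro ⟨hu, hv, hne⟩
      by_cases h : (u, v) ∈ T
      · exact Or.inl ⟨h, hu, hv⟩
      · have hvu : (v, u) ∈ T := (hT.2 v u (Ne.symm hne)).2 h
        exact Or.inr ⟨(v, u), ⟨hvu, hv, hu⟩, rfl⟩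
  have hcard := Finset.card_union_of_disjoint hdisj
  rw [hunion, Finset.offDiag_card,
    Finset.card_image_of_injective _ Prod.swap_injective] at hcard
  omega

open Finset in
lemma induce_card_eq_sum {T : Finset (V × V)} (P : Finset V) :
    (induce T P).card = ∑ u ∈ P, (T.filter (fun a => a.1 = u ∧ a.2 ∈ P)).card := by
  classical
  rw [Finset.card_eq_sum_card_fiberwise (f := fun a => a.1) (t := P)
      (fun a ha => (mem_filter.1 ha).2.1)]
  refine Finset.sum_congr rfl fun u hu => ?_
  congr 1
  ext a
  simp only [induce, mem_filter]
  constructor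
  · rintro ⟨⟨haT, _, h2⟩, h3⟩; exact ⟨haT, h3, h2⟩
  · rintro ⟨haT, h3, h2⟩; exact ⟨⟨haT, h3 ▸ hu, h2⟩, h3⟩

end Aux

/-- Lemma 2 of the paper. -/
theorem stmt1 {V : Type*} [Fintype V] [DecidableEq V]
    (T A' : Finset (V × V)) (k : ℕ)
    (hT : IsTournament T) (hDESC : IsDESC T A') (hk : A'.card ≤ k)
    (X : Finset V) (hcard : 4 * k + 3 ≤ X.card)
    (hdeg : ∀ x ∈ X, ∀ y ∈ X, (outDeg T x : ℤ) - outDeg T y ≤ k) :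
    ∃ C : Finset V, IsStrongComponent (T \ A') C ∧ ∀ x ∈ X, x ∈ C := by
  classical
  set T' := T \ A' with hT'def
  -- Key claim: every vertex of X reaches every other vertex of X in T'.
  have key : ∀ x ∈ X, ∀ y ∈ X, Reach T' y x := by
    intro x hx y hy
    by_contra hyx
    -- S = vertices that can reach x in T'
    set S : Finset V := Finset.univ.filter (fun v => Reach T' v x) with hSdef
    have hSmem : ∀ v, v ∈ S ↔ Reach T' v x := by
      intro v; simp [hSdef]
    have hxS : x ∈ S := (hSmem x).2 Relation.ReflTransGen.refl
    have hyS : y ∉ S := fun h => hyx ((hSmem y).1 h)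
    have hcut : ∀ u v : V, u ∉ S → v ∈ S → (u, v) ∈ T → (u, v) ∈ A' := by
      intro u v hu hv huvT
      by_contra hA
      exact hu ((hSmem u).2 (Relation.ReflTransGen.head
        (show (u, v) ∈ T' by rw [hT'def]; exact Finset.mem_sdiff.2 ⟨huvT, hA⟩)
        ((hSmem v).1 hv)))
    set P := X.filter (fun v => v ∈ S) with hPdef
    set Q := X.filter (fun v => v ∉ S) with hQdef
    have hPQ : P.card + Q.card = X.card :=
      Finset.card_filter_add_card_filter_not (p := fun v => v ∈ S)
    have hxP : x ∈ P := Finset.mem_filter.2 ⟨hx, hxS⟩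
    have hyQ : y ∈ Q := Finset.mem_filter.2 ⟨hy, hyS⟩
    have hPS : ∀ v ∈ P, v ∈ S := fun v hv => (Finset.mem_filter.1 hv).2
    have hQS : ∀ v ∈ Q, v ∉ S := fun v hv => (Finset.mem_filter.1 hv).2
    -- choose xs in P with large out-degree within P
    obtain ⟨xs, hxsP, hxs⟩ :
        ∃ u ∈ P, P.card ≤ 2 * (T.filter (fun a => a.1 = u ∧ a.2 ∈ P)).card + 1 := by
      by_contra hcon
      push_neg at hcon
      have hsum : ∑ u ∈ P, (2 * (T.filter (fun a => a.1 = u ∧ a.2 ∈ P)).card + 2)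
          ≤ ∑ _u ∈ P, P.card := by
        refine Finset.sum_le_sum fun u hu => ?_
        have := hcon u hu; omega
      rw [Finset.sum_const, smul_eq_mul] at hsum
      have h2 : 2 * (induce T P).card = P.card * P.card - P.card :=
        two_mul_induce_card hT P
      rw [induce_card_eq_sum] at h2
      have hsum2 : ∑ u ∈ P, (2 * (T.filter (fun a => a.1 = u ∧ a.2 ∈ P)).card + 2)
          = 2 * ∑ u ∈ P, (T.filter (fun a => a.1 = u ∧ a.2 ∈ P)).card + 2 * P.card := by
        rw [Finset.sum_add_distrib, Finset.sum_const, smul_eq_mul, Finset.mul_sum]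
        ring
      have hp1 : 1 ≤ P.card := Finset.card_pos.2 ⟨x, hxP⟩
      have hsq : P.card ≤ P.card * P.card := Nat.le_mul_of_pos_left _ hp1
      omega
    -- choose ys in Q with small out-degree within Q
    obtain ⟨ys, hysQ, hys⟩ :
        ∃ u ∈ Q, 2 * (T.filter (fun a => a.1 = u ∧ a.2 ∈ Q)).card + 1 ≤ Q.card := by
      by_contra hcon
      push_neg at hcon
      have hsum : ∑ _u ∈ Q, Q.card
          ≤ ∑ u ∈ Q, 2 * (T.filter (fun a => a.1 = u ∧ a.2 ∈ Q)).card := by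
        refine Finset.sum_le_sum fun u hu => ?_
        have := hcon u hu; omega
      rw [Finset.sum_const, smul_eq_mul] at hsum
      have h2 : 2 * (induce T Q).card = Q.card * Q.card - Q.card :=
        two_mul_induce_card hT Q
      rw [induce_card_eq_sum] at h2
      rw [← Finset.mul_sum] at hsum
      have hq1 : 1 ≤ Q.card := Finset.card_pos.2 ⟨y, hyQ⟩
      have hsq : Q.card ≤ Q.card * Q.card := Nat.le_mul_of_pos_left _ hq1
      omega
    have hxsX : xs ∈ X := (Finset.mem_filter.1 hxsP).1
    have hysX : ys ∈ X := (Finset.mem_filter.1 hysQ).1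
    have hxsS : xs ∈ S := hPS xs hxsP
    have hysS : ys ∉ S := hQS ys hysQ
    set Sc : Finset V := Finset.univ.filter (fun v => v ∉ S) with hScdef
    set dP := (T.filter (fun a => a.1 = xs ∧ a.2 ∈ P)).card with hdPdef
    set dQ := (T.filter (fun a => a.1 = ys ∧ a.2 ∈ Q)).card with hdQdef
    set Ea := A'.filter (fun e => e.2 = xs ∧ e.1 ∉ S) with hEadef
    set Eb := A'.filter (fun e => e.1 = ys ∧ e.2 ∈ S) with hEbdef
    -- split out-degrees along the cut
    have hsplit : ∀ u : V, outDeg T u =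
        (T.filter (fun a => a.1 = u ∧ a.2 ∈ S)).card
          + (T.filter (fun a => a.1 = u ∧ a.2 ∉ S)).card := by
      intro u
      rw [outDeg, ← Finset.card_filter_add_card_filter_not
        (p := fun a : V × V => a.2 ∈ S), Finset.filter_filter, Finset.filter_filter]
    -- lower bound on outDeg T xs
    have hxs1 : dP ≤ (T.filter (fun a => a.1 = xs ∧ a.2 ∈ S)).card := by
      apply Finset.card_le_card
      intro a ha
      have h := Finset.mem_filter.1 ha
      exact Finset.mem_filter.2 ⟨h.1, h.2.1, hPS _ h.2.2⟩
    have hxs2 : Sc.card ≤ (T.filter (fun a => a.1 = xs ∧ a.2 ∉ S)).card + Ea.card := by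
      have hsub : Sc ⊆ (T.filter (fun a => a.1 = xs ∧ a.2 ∉ S)).image Prod.snd
          ∪ Ea.image Prod.fst := by
        intro u hu
        have huS : u ∉ S := (Finset.mem_filter.1 hu).2
        have hne : xs ≠ u := fun h => huS (h ▸ hxsS)
        rcases (Classical.em ((xs, u) ∈ T)) with h | h
        · exact Finset.mem_union_left _
            (Finset.mem_image.2 ⟨(xs, u), Finset.mem_filter.2 ⟨h, rfl, huS⟩, rfl⟩)
        · have hux : (u, xs) ∈ T := (hT.2 u xs (Ne.symm hne)).2 h
          have hA : (u, xs) ∈ A' := hcut u xs huS hxsS hux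
          exact Finset.mem_union_right _
            (Finset.mem_image.2 ⟨(u, xs), Finset.mem_filter.2 ⟨hA, rfl, huS⟩, rfl⟩)
      calc Sc.card ≤ _ := Finset.card_le_card hsub
        _ ≤ _ := Finset.card_union_le _ _
        _ ≤ _ := Nat.add_le_add (Finset.card_image_le) (Finset.card_image_le)
    -- upper bound on outDeg T ys
    have hys1 : (T.filter (fun a => a.1 = ys ∧ a.2 ∈ S)).card ≤ Eb.card := by
      apply Finset.card_le_card
      intro a ha
      have h := Finset.mem_filter.1 ha
      refine Finset.mem_filter.2 ⟨?_, h.2.1, h.2.2⟩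
      have : a = (ys, a.2) := by rw [← h.2.1]
      rw [this]
      exact hcut ys a.2 hysS h.2.2 (this ▸ h.1)
    have hQSc : Q ⊆ Sc := fun v hv =>
      Finset.mem_filter.2 ⟨Finset.mem_univ v, hQS v hv⟩
    have hys2 : (T.filter (fun a => a.1 = ys ∧ a.2 ∉ S)).card + Q.card
        ≤ dQ + Sc.card := by
      have hsplit2 : (T.filter (fun a => a.1 = ys ∧ a.2 ∉ S)).card =
          (T.filter (fun a => (a.1 = ys ∧ a.2 ∉ S) ∧ a.2 ∈ Q)).card
            + (T.filter (fun a => (a.1 = ys ∧ a.2 ∉ S) ∧ a.2 ∉ Q)).card := by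
        rw [← Finset.card_filter_add_card_filter_not
          (p := fun a : V × V => a.2 ∈ Q), Finset.filter_filter, Finset.filter_filter]
      have h1 : (T.filter (fun a => (a.1 = ys ∧ a.2 ∉ S) ∧ a.2 ∈ Q)).card ≤ dQ := by
        apply Finset.card_le_card
        intro a ha
        have h := Finset.mem_filter.1 ha
        exact Finset.mem_filter.2 ⟨h.1, h.2.1.1, h.2.2⟩
      have h2 : (T.filter (fun a => (a.1 = ys ∧ a.2 ∉ S) ∧ a.2 ∉ Q)).card
          ≤ (Sc \ Q).card := by
        apply Finset.card_le_card_of_injOn Prod.snd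
        · intro a ha
          have h := Finset.mem_filter.1 ha
          exact Finset.mem_sdiff.2 ⟨Finset.mem_filter.2 ⟨Finset.mem_univ _, h.2.1.2⟩, h.2.2⟩
        · intro a ha b hb hab
          have h1 := (Finset.mem_filter.1 ha).2.1.1
          have h2 := (Finset.mem_filter.1 hb).2.1.1
          exact Prod.ext (h1.trans h2.symm) hab
      have h3 : (Sc \ Q).card = Sc.card - Q.card := Finset.card_sdiff_of_subset hQSc
      have h4 : Q.card ≤ Sc.card := Finset.card_le_card hQSc
      omega
    -- the overlap bound
    have hab : Ea.card + Eb.card ≤ k + 1 := by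
      have hU : Ea ∪ Eb ⊆ A' := Finset.union_subset
        (Finset.filter_subset _ _) (Finset.filter_subset _ _)
      have hI : Ea ∩ Eb ⊆ {(ys, xs)} := by
        intro e he
        have h1 := Finset.mem_filter.1 (Finset.mem_inter.1 he).1
        have h2 := Finset.mem_filter.1 (Finset.mem_inter.1 he).2
        simp only [Finset.mem_singleton]
        exact Prod.ext h2.2.1 h1.2.1
      have := Finset.card_union_add_card_inter Ea Eb
      have hUc : (Ea ∪ Eb).card ≤ k := le_trans (Finset.card_le_card hU) hk
      have hIc : (Ea ∩ Eb).card ≤ 1 := le_trans (Finset.card_le_card hI) (by simp)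
      omega
    -- final arithmetic
    have hdeg1 := hdeg xs hxsX ys hysX
    have ho1 := hsplit xs
    have ho2 := hsplit ys
    omega
  -- Now build the strong component of x₀
  have hXne : X.Nonempty := Finset.card_pos.1 (by omega)
  obtain ⟨x₀, hx₀⟩ := hXne
  set C : Finset V := Finset.univ.filter (fun v => Reach T' x₀ v ∧ Reach T' v x₀) with hCdef
  have hmemC : ∀ v, v ∈ C ↔ Reach T' x₀ v ∧ Reach T' v x₀ := by
    intro v; simp [hCdef]
  have hx₀C : x₀ ∈ C := (hmemC x₀).2 ⟨Relation.ReflTransGen.refl, Relation.ReflTransGen.refl⟩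
  have main : ∀ u v : V, Reach T' u v → Reach T' v x₀ → u ∈ C →
      Reach (induce T' C) u v := by
    intro u v hr
    induction hr using Relation.ReflTransGen.head_induction_on with
    | refl => intro _ _; exact Relation.ReflTransGen.refl
    | head hac hcb ih =>
      rename_i a c
      intro hvx₀ haC
      have hcC : c ∈ C := by
        refine (hmemC c).2 ⟨Relation.ReflTransGen.tail ((hmemC a).1 haC).1 hac,
          Relation.ReflTransGen.trans hcb hvx₀⟩
      refine Relation.ReflTransGen.head ?_ (ih hvx₀ hcC)
      exact Finset.mem_filter.2 ⟨hac, haC, hcC⟩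
  refine ⟨C, ⟨⟨x₀, hx₀C⟩, ?_, ?_⟩, ?_⟩
  · intro u hu v hv
    have h1 := (hmemC u).1 hu
    have h2 := (hmemC v).1 hv
    exact main u v (Relation.ReflTransGen.trans h1.2 h2.1) h2.2 hu
  · intro Y hCY hY
    refine Finset.Subset.antisymm ?_ hCY
    intro v hv
    have hx₀Y : x₀ ∈ Y := hCY hx₀C
    refine (hmemC v).2 ⟨?_, ?_⟩
    · exact reach_mono (Finset.filter_subset _ _) (hY x₀ hx₀Y v hv)
    · exact reach_mono (Finset.filter_subset _ _) (hY v hv x₀ hx₀Y)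
  · intro z hz
    exact (hmemC z).2 ⟨key z hz x₀ hx₀, key x₀ hx₀ z hz⟩
end

section
/- Let T be a tournament on a finite vertex set, let A' be a DESC-set of T, and let T' = T − A'. Let X be the vertex set of a strong component of T'. Then for every vertex x ∈ X, the out-degree of x in the induced subgraph T[X] satisfies (|X| − 1 − d*(x, X))/2 ≤ d⁺_{T[X]}(x) ≤ (|X| − 1 + d*(x, X))/2, where d*(x, X) is the number of arcs of A' joining x to a vertex of X (in either direction). -/
open DescPaper

theorem stmt4 {V : Type*} [Fintype V] [DecidableEq V]
    (T A' : Finset (V × V))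
    (hT : IsTournament T) (hDESC : IsDESC T A')
    (X : Finset V) (hX : IsStrongComponent (T \ A') X) :
    ∀ x ∈ X,
      ((X.card : ℚ) - 1 - dstar A' {x} X) / 2 ≤ (outDeg (induce T X) x : ℚ) ∧
      (outDeg (induce T X) x : ℚ) ≤ ((X.card : ℚ) - 1 + dstar A' {x} X) / 2 := by

  intro x hx
  obtain ⟨hA'T, hEul⟩ := hDESC
  have hbal := (hEul X hX).2
  have hnoloop : ∀ a : V × V, a ∈ A' → a.1 ≠ a.2 := by
    rintro ⟨u, v⟩ ha h
    simp only at h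
    subst h
    exact hT.1 u (hA'T ha)
  -- decomposition of induced subgraph
  have hTunion : T = (T \ A') ∪ A' := (Finset.sdiff_union_of_subset hA'T).symm
  have hdisj : Disjoint (T \ A') A' := Finset.sdiff_disjoint
  have hind : induce T X = induce (T \ A') X ∪ induce A' X := by
    unfold induce
    conv_lhs => rw [hTunion]
    rw [Finset.filter_union]
  have hinddisj : Disjoint (induce (T \ A') X) (induce A' X) :=
    Finset.disjoint_filter_filter hdisj
  have h1 : outDeg (induce T X) x
      = outDeg (induce (T \ A') X) x + outDeg (induce A' X) x := by
    unfold outDeg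
    rw [hind, Finset.filter_union,
      Finset.card_union_of_disjoint (Finset.disjoint_filter_filter hinddisj)]
  have h2 : inDeg (induce T X) x
      = inDeg (induce (T \ A') X) x + inDeg (induce A' X) x := by
    unfold inDeg
    rw [hind, Finset.filter_union,
      Finset.card_union_of_disjoint (Finset.disjoint_filter_filter hinddisj)]
  have h3 : outDeg (induce (T \ A') X) x = inDeg (induce (T \ A') X) x := hbal x
  -- degree sum in a tournament
  have hOout : outDeg (induce T X) x = (X.filter (fun y => (x, y) ∈ T)).card := by
    unfold outDeg induce
    rw [Finset.filter_filter]
    have himg : T.filter (fun a => (a.1 ∈ X ∧ a.2 ∈ X) ∧ a.1 = x)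
        = (X.filter (fun y => (x, y) ∈ T)).image (fun y => (x, y)) := by
      ext ⟨u, v⟩
      simp only [Finset.mem_filter, Finset.mem_image]
      constructor
      · rintro ⟨hTm, ⟨hu, hv⟩, rfl⟩
        exact ⟨v, ⟨hv, hTm⟩, rfl⟩
      · rintro ⟨y, ⟨hy, hyT⟩, heq⟩
        obtain ⟨rfl, rfl⟩ := Prod.mk.injEq .. ▸ heq
        exact ⟨hyT, ⟨hx, hy⟩, rfl⟩
    rw [himg, Finset.card_image_of_injective _ (fun a b h => by simpa using h)]
  have hOin : inDeg (induce T X) x = (X.filter (fun y => (y, x) ∈ T)).card := by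
    unfold inDeg induce
    rw [Finset.filter_filter]
    have himg : T.filter (fun a => (a.1 ∈ X ∧ a.2 ∈ X) ∧ a.2 = x)
        = (X.filter (fun y => (y, x) ∈ T)).image (fun y => (y, x)) := by
      ext ⟨u, v⟩
      simp only [Finset.mem_filter, Finset.mem_image]
      constructor
      · rintro ⟨hTm, ⟨hu, hv⟩, rfl⟩
        exact ⟨u, ⟨hu, hTm⟩, rfl⟩
      · rintro ⟨y, ⟨hy, hyT⟩, heq⟩
        obtain ⟨rfl, rfl⟩ := Prod.mk.injEq .. ▸ heq
        exact ⟨hyT, ⟨hy, hx⟩, rfl⟩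
    rw [himg, Finset.card_image_of_injective _ (fun a b h => by simpa using h)]
  have hunion : X.filter (fun y => (x, y) ∈ T) ∪ X.filter (fun y => (y, x) ∈ T)
      = X.erase x := by
    ext y
    simp only [Finset.mem_union, Finset.mem_filter, Finset.mem_erase]
    constructor
    · rintro (⟨hy, h⟩ | ⟨hy, h⟩)
      · exact ⟨fun e => hT.1 x (e ▸ h), hy⟩
      · exact ⟨fun e => hT.1 x (e ▸ h), hy⟩
    · rintro ⟨hne, hy⟩
      by_cases hc : (x, y) ∈ T
      · exact Or.inl ⟨hy, hc⟩
      · exact Or.inr ⟨hy, ((hT.2 y x hne).mpr hc)⟩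
  have hdisj2 : Disjoint (X.filter (fun y => (x, y) ∈ T))
      (X.filter (fun y => (y, x) ∈ T)) := by
    rw [Finset.disjoint_left]
    rintro y h1' h2'
    simp only [Finset.mem_filter] at h1' h2'
    rcases eq_or_ne x y with rfl | hne
    · exact hT.1 x h1'.2
    · exact ((hT.2 x y hne).mp h1'.2) h2'.2
  have h4 : outDeg (induce T X) x + inDeg (induce T X) x + 1 = X.card := by
    rw [hOout, hOin, ← Finset.card_union_of_disjoint hdisj2, hunion,
      Finset.card_erase_add_one hx]
  -- dstar computation
  have e1 : (induce A' X).filter (fun a => a.1 = x)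
      = A'.filter (fun a => a.1 ∈ ({x} : Finset V) ∧ a.2 ∈ X) := by
    ext a
    simp only [induce, Finset.mem_filter, Finset.mem_singleton]
    constructor
    · rintro ⟨⟨ha, h1', h2'⟩, h3'⟩
      exact ⟨ha, h3', h2'⟩
    · rintro ⟨ha, h1', h2'⟩
      exact ⟨⟨ha, by rw [h1']; exact hx, h2'⟩, h1'⟩
  have e2 : (induce A' X).filter (fun a => a.2 = x)
      = A'.filter (fun a => a.1 ∈ X ∧ a.2 ∈ ({x} : Finset V)) := by
    ext a
    simp only [induce, Finset.mem_filter, Finset.mem_singleton]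
    constructor
    · rintro ⟨⟨ha, h1', h2'⟩, h3'⟩
      exact ⟨ha, h1', h3'⟩
    · rintro ⟨ha, h1', h2'⟩
      exact ⟨⟨ha, h1', by rw [h2']; exact hx⟩, h2'⟩
  have hdisj3 : Disjoint (A'.filter (fun a => a.1 ∈ ({x} : Finset V) ∧ a.2 ∈ X))
      (A'.filter (fun a => a.1 ∈ X ∧ a.2 ∈ ({x} : Finset V))) := by
    rw [Finset.disjoint_left]
    rintro a ha1 ha2
    simp only [Finset.mem_filter, Finset.mem_singleton] at ha1 ha2
    exact hnoloop a ha1.1 (ha1.2.1.trans ha2.2.2.symm)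
  have h5 : dstar A' {x} X = outDeg (induce A' X) x + inDeg (induce A' X) x := by
    unfold dstar outDeg inDeg
    rw [e1, e2, Finset.filter_or, Finset.card_union_of_disjoint hdisj3]
  -- arithmetic
  have c1 : (outDeg (induce T X) x : ℚ)
      = (outDeg (induce (T \ A') X) x : ℚ) + (outDeg (induce A' X) x : ℚ) := by
    exact_mod_cast congrArg (Nat.cast : ℕ → ℚ) h1
  have c2 : (inDeg (induce T X) x : ℚ)
      = (inDeg (induce (T \ A') X) x : ℚ) + (inDeg (induce A' X) x : ℚ) := by
    exact_mod_cast congrArg (Nat.cast : ℕ → ℚ) h2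
  have c3 : (outDeg (induce (T \ A') X) x : ℚ) = (inDeg (induce (T \ A') X) x : ℚ) := by
    exact_mod_cast congrArg (Nat.cast : ℕ → ℚ) h3
  have c4 : (outDeg (induce T X) x : ℚ) + (inDeg (induce T X) x : ℚ) + 1 = X.card := by
    exact_mod_cast congrArg (Nat.cast : ℕ → ℚ) h4
  have c5 : (dstar A' {x} X : ℚ)
      = (outDeg (induce A' X) x : ℚ) + (inDeg (induce A' X) x : ℚ) := by
    exact_mod_cast congrArg (Nat.cast : ℕ → ℚ) h5
  have n1 : (0 : ℚ) ≤ (outDeg (induce A' X) x : ℚ) := Nat.cast_nonneg _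
  have n2 : (0 : ℚ) ≤ (inDeg (induce A' X) x : ℚ) := Nat.cast_nonneg _
  constructor
  · linarith
  · linarith
end

section
/- Let T be a tournament on a finite vertex set, let A' be a DESC-set of T, and let T' = T − A'. Let U be the vertex set of a strong component of T'. Then for any two vertices x, y ∈ U, the out-degrees inside the induced tournament T[U] satisfy |d⁺_{T[U]}(x) − d⁺_{T[U]}(y)| ≤ (d*(x, U) + d*(y, U))/2, where d*(v, U) is the number of arcs of A' joining v to a vertex of U (in either direction). -/
open DescPaper

set_option linter.unusedSectionVars false

section Aux

variable {V : Type*} [Fintype V] [DecidableEq V]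

lemma card_split (T A' : Finset (V × V)) (h : A' ⊆ T)
    (p : V × V → Prop) [DecidablePred p] :
    (T.filter p).card = ((T \ A').filter p).card + (A'.filter p).card := by
  rw [← Finset.card_union_of_disjoint
      (Finset.disjoint_filter_filter Finset.sdiff_disjoint),
    ← Finset.filter_union, Finset.sdiff_union_of_subset h]

lemma outDeg_eq (T : Finset (V × V)) (U : Finset V) (x : V) (hx : x ∈ U) :
    outDeg (induce T U) x = (T.filter (fun a => a.1 = x ∧ a.2 ∈ U)).card := by
  unfold outDeg induce
  congr 1
  ext a
  simp only [Finset.mem_filter]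
  constructor
  · rintro ⟨⟨ha, _, h2⟩, h1⟩; exact ⟨ha, h1, h2⟩
  · rintro ⟨ha, h1, h2⟩; exact ⟨⟨ha, h1 ▸ hx, h2⟩, h1⟩

lemma inDeg_eq (T : Finset (V × V)) (U : Finset V) (x : V) (hx : x ∈ U) :
    inDeg (induce T U) x = (T.filter (fun a => a.2 = x ∧ a.1 ∈ U)).card := by
  unfold inDeg induce
  congr 1
  ext a
  simp only [Finset.mem_filter]
  constructor
  · rintro ⟨⟨ha, h1, _⟩, h2⟩; exact ⟨ha, h2, h1⟩
  · rintro ⟨ha, h2, h1⟩; exact ⟨⟨ha, h1, h2 ▸ hx⟩, h2⟩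

lemma deg_sum (T : Finset (V × V)) (hT : IsTournament T)
    (U : Finset V) (x : V) (hx : x ∈ U) :
    outDeg (induce T U) x + inDeg (induce T U) x = (U.erase x).card := by
  rw [outDeg_eq T U x hx, inDeg_eq T U x hx]
  have h1 : (T.filter (fun a => a.1 = x ∧ a.2 ∈ U)).card
      = ((U.erase x).filter (fun y => (x, y) ∈ T)).card := by
    apply Finset.card_nbij' (fun a => a.2) (fun y => (x, y))
    · intro a ha
      simp only [Finset.mem_coe, Finset.mem_filter] at ha ⊢
      refine ⟨Finset.mem_erase.mpr ⟨?_, ha.2.2⟩, ?_⟩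
      · intro h
        have hxx : a = (x, x) := Prod.ext ha.2.1 h
        exact hT.1 x (hxx ▸ ha.1)
      · have : a = (x, a.2) := Prod.ext ha.2.1 rfl
        exact this ▸ ha.1
    · intro y hy
      simp only [Finset.mem_coe, Finset.mem_filter, Finset.mem_erase] at hy ⊢
      exact ⟨hy.2, trivial, hy.1.2⟩
    · intro a ha
      simp only [Finset.mem_coe, Finset.mem_filter] at ha
      exact Prod.ext ha.2.1.symm rfl
    · intro y hy; rfl
  have h2 : (T.filter (fun a => a.2 = x ∧ a.1 ∈ U)).card
      = ((U.erase x).filter (fun y => (y, x) ∈ T)).card := by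
    apply Finset.card_nbij' (fun a => a.1) (fun y => (y, x))
    · intro a ha
      simp only [Finset.mem_coe, Finset.mem_filter] at ha ⊢
      refine ⟨Finset.mem_erase.mpr ⟨?_, ha.2.2⟩, ?_⟩
      · intro h
        have hxx : a = (x, x) := Prod.ext h ha.2.1
        exact hT.1 x (hxx ▸ ha.1)
      · have : a = (a.1, x) := Prod.ext rfl ha.2.1
        exact this ▸ ha.1
    · intro y hy
      simp only [Finset.mem_coe, Finset.mem_filter, Finset.mem_erase] at hy ⊢
      exact ⟨hy.2, trivial, hy.1.2⟩
    · intro a ha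
      simp only [Finset.mem_coe, Finset.mem_filter] at ha
      exact Prod.ext rfl ha.2.1.symm
    · intro y hy; rfl
  rw [h1, h2]
  have h3 : ((U.erase x).filter (fun y => (y, x) ∈ T))
      = ((U.erase x).filter (fun y => ¬ (x, y) ∈ T)) := by
    apply Finset.filter_congr
    intro y hy
    have hne : y ≠ x := (Finset.mem_erase.mp hy).1
    constructor
    · exact fun h => (hT.2 y x hne).mp h
    · exact fun h => (hT.2 y x hne).mpr h
  rw [h3]
  exact Finset.card_filter_add_card_filter_not _

lemma dstar_split (T A' : Finset (V × V)) (hT : IsTournament T) (hA : A' ⊆ T)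
    (U : Finset V) (x : V) :
    dstar A' {x} U = (A'.filter (fun a => a.1 = x ∧ a.2 ∈ U)).card
      + (A'.filter (fun a => a.2 = x ∧ a.1 ∈ U)).card := by
  unfold dstar
  have : (A'.filter (fun a => (a.1 ∈ ({x} : Finset V) ∧ a.2 ∈ U) ∨ (a.1 ∈ U ∧ a.2 ∈ ({x} : Finset V))))
      = (A'.filter (fun a => a.1 = x ∧ a.2 ∈ U)) ∪ (A'.filter (fun a => a.2 = x ∧ a.1 ∈ U)) := by
    ext a
    simp only [Finset.mem_filter, Finset.mem_union, Finset.mem_singleton]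
    tauto
  rw [this, Finset.card_union_of_disjoint]
  rw [Finset.disjoint_filter]
  rintro a ha ⟨h1, _⟩ ⟨h2, _⟩
  have hxx : a = (x, x) := Prod.ext h1 h2
  exact hT.1 x (hxx ▸ hA ha)

lemma key_identity (T A' : Finset (V × V)) (hT : IsTournament T) (hDESC : IsDESC T A')
    (U : Finset V) (hU : IsStrongComponent (T \ A') U) (x : V) (hx : x ∈ U) :
    2 * (outDeg (induce T U) x : ℚ)
      + (A'.filter (fun a => a.2 = x ∧ a.1 ∈ U)).card
      = (U.erase x).card + (A'.filter (fun a => a.1 = x ∧ a.2 ∈ U)).card := by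
  have hbal := (hDESC.2 U hU).2 x
  have ho : outDeg (induce T U) x
      = outDeg (induce (T \ A') U) x + (A'.filter (fun a => a.1 = x ∧ a.2 ∈ U)).card := by
    rw [outDeg_eq T U x hx, outDeg_eq (T \ A') U x hx]
    exact card_split T A' hDESC.1 _
  have hi : inDeg (induce T U) x
      = inDeg (induce (T \ A') U) x + (A'.filter (fun a => a.2 = x ∧ a.1 ∈ U)).card := by
    rw [inDeg_eq T U x hx, inDeg_eq (T \ A') U x hx]
    exact card_split T A' hDESC.1 _
  have hsum := deg_sum T hT U x hx
  have : outDeg (induce T U) x + (A'.filter (fun a => a.2 = x ∧ a.1 ∈ U)).card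
      = inDeg (induce T U) x + (A'.filter (fun a => a.1 = x ∧ a.2 ∈ U)).card := by
    rw [ho, hi, hbal]; ring
  have hq : (outDeg (induce T U) x : ℚ) + (A'.filter (fun a => a.2 = x ∧ a.1 ∈ U)).card
      = inDeg (induce T U) x + (A'.filter (fun a => a.1 = x ∧ a.2 ∈ U)).card := by
    exact_mod_cast congrArg (Nat.cast : ℕ → ℚ) this
  have hq2 : (outDeg (induce T U) x : ℚ) + inDeg (induce T U) x = (U.erase x).card := by
    exact_mod_cast congrArg (Nat.cast : ℕ → ℚ) hsum
  linarith

end Aux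


theorem stmt5 {V : Type*} [Fintype V] [DecidableEq V]
    (T A' : Finset (V × V))
    (hT : IsTournament T) (hDESC : IsDESC T A')
    (U : Finset V) (hU : IsStrongComponent (T \ A') U) :
    ∀ x ∈ U, ∀ y ∈ U,
      |(outDeg (induce T U) x : ℚ) - outDeg (induce T U) y|
        ≤ ((dstar A' {x} U : ℚ) + dstar A' {y} U) / 2 := by
  intro x hx y hy
  have hxk := key_identity T A' hT hDESC U hU x hx
  have hyk := key_identity T A' hT hDESC U hU y hy
  have hex : (U.erase x).card = U.card - 1 := Finset.card_erase_of_mem hx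
  have hey : (U.erase y).card = U.card - 1 := Finset.card_erase_of_mem hy
  have heq : ((U.erase x).card : ℚ) = (U.erase y).card := by rw [hex, hey]
  have hdx : (dstar A' {x} U : ℚ)
      = (A'.filter (fun a => a.1 = x ∧ a.2 ∈ U)).card
        + (A'.filter (fun a => a.2 = x ∧ a.1 ∈ U)).card := by
    exact_mod_cast congrArg (Nat.cast : ℕ → ℚ) (dstar_split T A' hT hDESC.1 U x)
  have hdy : (dstar A' {y} U : ℚ)
      = (A'.filter (fun a => a.1 = y ∧ a.2 ∈ U)).card
        + (A'.filter (fun a => a.2 = y ∧ a.1 ∈ U)).card := by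
    exact_mod_cast congrArg (Nat.cast : ℕ → ℚ) (dstar_split T A' hT hDESC.1 U y)
  have n1 : (0:ℚ) ≤ (A'.filter (fun a => a.1 = x ∧ a.2 ∈ U)).card := Nat.cast_nonneg _
  have n2 : (0:ℚ) ≤ (A'.filter (fun a => a.2 = x ∧ a.1 ∈ U)).card := Nat.cast_nonneg _
  have n3 : (0:ℚ) ≤ (A'.filter (fun a => a.1 = y ∧ a.2 ∈ U)).card := Nat.cast_nonneg _
  have n4 : (0:ℚ) ≤ (A'.filter (fun a => a.2 = y ∧ a.1 ∈ U)).card := Nat.cast_nonneg _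
  rw [abs_le]
  constructor <;> linarith
end

section
/- Let T be a tournament with vertex set V, let A' be a DESC-set of T, and let T' = T − A'. Let U be the vertex set of a strong component of T'. Then for any two vertices x, y ∈ U, the numbers of arcs of T going from x into V∖U and from y into V∖U differ by at most d*(U, V∖U), i.e., |d⁺_{V∖U}(x) − d⁺_{V∖U}(y)| ≤ d*(U, V∖U), where d⁺_{V∖U}(v) is the number of arcs of T from v to a vertex of V∖U and d*(U, V∖U) is the number of arcs of A' with one endpoint in U and the other in V∖U. -/
open DescPaper

namespace DescPaper
section Aux

variable {V : Type*} [Fintype V] [DecidableEq V]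

lemma reach_mono_s6 {D E : Finset (V × V)} (h : D ⊆ E) {a b : V}
    (hr : Reach D a b) : Reach E a b :=
  Relation.ReflTransGen.mono (r := fun u v => (u, v) ∈ D) (fun _ _ huv => h huv) a b hr

lemma key_one_sided (T A' : Finset (V × V))
    (hT : IsTournament T) (hDESC : IsDESC T A')
    (U : Finset V) (hU : IsStrongComponent (T \ A') U)
    {x y : V} (hx : x ∈ U) (hy : y ∈ U) :
    outDegInto T x Uᶜ ≤ outDegInto T y Uᶜ + dstar A' U Uᶜ := by
  by_cases hxy : x = y
  · subst hxy; exact Nat.le_add_right _ _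
  set D' := T \ A' with hD'
  -- the key claim, using maximality of the strong component U
  have claim : ∀ z : V, z ∉ U → (x, z) ∈ D' → (y, z) ∉ D' →
      (y, z) ∈ A' ∨ (z, y) ∈ A' := by
    intro z hzU hxz hyz
    have hyz' : y ≠ z := fun h => hzU (h ▸ hy)
    by_cases h1 : (y, z) ∈ T
    · left
      by_contra hA
      exact hyz (Finset.mem_sdiff.mpr ⟨h1, hA⟩)
    · have h2 : (z, y) ∈ T := by
        by_contra h2
        exact ((hT.2 y z hyz').mpr h2) |> h1
      by_cases h3 : (z, y) ∈ A'
      · exact Or.inr h3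
      · exfalso
        have hzy : (z, y) ∈ D' := Finset.mem_sdiff.mpr ⟨h2, h3⟩
        have hsub : induce D' U ⊆ induce D' (insert z U) := by
          intro a ha
          simp only [induce, Finset.mem_filter, Finset.mem_insert] at ha ⊢
          tauto
        have hxz' : (x, z) ∈ induce D' (insert z U) :=
          Finset.mem_filter.mpr ⟨hxz, Finset.mem_insert.mpr (Or.inr hx),
            Finset.mem_insert_self z U⟩
        have hzy' : (z, y) ∈ induce D' (insert z U) :=
          Finset.mem_filter.mpr ⟨hzy, Finset.mem_insert_self z U,
            Finset.mem_insert.mpr (Or.inr hy)⟩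
        have hconn : StronglyConnectedOn D' (insert z U) := by
          intro a ha b hb
          rcases Finset.mem_insert.mp ha with rfl | haU
          · rcases Finset.mem_insert.mp hb with rfl | hbU
            · exact Relation.ReflTransGen.refl
            · exact (Relation.ReflTransGen.single hzy').trans
                (reach_mono_s6 hsub (hU.2.1 y hy b hbU))
          · rcases Finset.mem_insert.mp hb with rfl | hbU
            · exact (reach_mono_s6 hsub (hU.2.1 a haU x hx)).trans
                (Relation.ReflTransGen.single hxz')
            · exact reach_mono_s6 hsub (hU.2.1 a haU b hbU)
        have heq := hU.2.2 (insert z U) (Finset.subset_insert z U) hconn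
        exact hzU (heq ▸ Finset.mem_insert_self z U)
  -- counting
  set Fx := D'.filter (fun a => a.1 = x ∧ a.2 ∈ Uᶜ) with hFx
  set Fy := D'.filter (fun a => a.1 = y ∧ a.2 ∈ Uᶜ) with hFy
  set Gx := A'.filter (fun a => a.1 = x ∧ a.2 ∈ Uᶜ) with hGx
  set Gy := A'.filter (fun a => a.1 = y ∧ a.2 ∈ Uᶜ) with hGy
  set Dst := A'.filter (fun a => (a.1 ∈ U ∧ a.2 ∈ Uᶜ) ∨ (a.1 ∈ Uᶜ ∧ a.2 ∈ U)) with hDst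
  set Bx := Dst.filter (fun a => a.1 = x) with hBx
  set By := Dst.filter (fun a => a.1 = y ∨ a.2 = y) with hBy
  have hsplit : ∀ v : V, outDegInto T v Uᶜ =
      (D'.filter (fun a => a.1 = v ∧ a.2 ∈ Uᶜ)).card +
      (A'.filter (fun a => a.1 = v ∧ a.2 ∈ Uᶜ)).card := by
    intro v
    have hunion : D' ∪ A' = T := Finset.sdiff_union_of_subset hDESC.1
    have hdisj : Disjoint D' A' := Finset.sdiff_disjoint
    rw [outDegInto, ← hunion, Finset.filter_union,
      Finset.card_union_of_disjoint (Finset.disjoint_filter_filter hdisj)]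
  have hGxBx : Gx = Bx := by
    ext a
    simp only [hGx, hBx, hDst, Finset.mem_filter, Finset.mem_compl]
    constructor
    · rintro ⟨hA, rfl, h2⟩
      exact ⟨⟨hA, Or.inl ⟨hx, h2⟩⟩, rfl⟩
    · rintro ⟨⟨hA, hcross⟩, rfl⟩
      refine ⟨hA, rfl, ?_⟩
      rcases hcross with ⟨_, h2⟩ | ⟨h1, _⟩
      · exact h2
      · exact absurd hx h1
  -- the injection Fx → Fy ∪ By
  have hFxy : Fx.card ≤ Fy.card + By.card := by
    set f : V × V → V × V := fun a =>
      if (y, a.2) ∈ D' then (y, a.2)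
      else if (y, a.2) ∈ A' then (y, a.2) else (a.2, y) with hf
    have hrec : ∀ a ∈ Fx, (if (f a).1 = y then (f a).2 else (f a).1) = a.2 := by
      intro a ha
      simp only [hFx, Finset.mem_filter, Finset.mem_compl] at ha
      obtain ⟨haD, ha1, ha2⟩ := ha
      by_cases h1 : (y, a.2) ∈ D'
      · simp [hf, h1]
      · by_cases h2 : (y, a.2) ∈ A'
        · simp [hf, h1, h2]
        · have : a.2 ≠ y := fun h => ha2 (h ▸ hy)
          simp [hf, h1, h2, this]
    have hmaps : ∀ a ∈ Fx, f a ∈ Fy ∪ By := by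
      intro a ha
      simp only [hFx, Finset.mem_filter, Finset.mem_compl] at ha
      obtain ⟨haD, ha1, ha2⟩ := ha
      have haxz : (x, a.2) ∈ D' := by
        have : a = (x, a.2) := Prod.ext ha1 rfl
        rwa [← this]
      by_cases h1 : (y, a.2) ∈ D'
      · apply Finset.mem_union_left
        simp only [hFy, Finset.mem_filter, Finset.mem_compl]
        simp [hf, h1, ha2]
      · apply Finset.mem_union_right
        have hc := claim a.2 ha2 haxz h1
        by_cases h2 : (y, a.2) ∈ A'
        · have hfa : f a = (y, a.2) := by simp [hf, h1, h2]
          rw [hfa]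
          exact Finset.mem_filter.mpr ⟨Finset.mem_filter.mpr ⟨h2, Or.inl ⟨hy, Finset.mem_compl.mpr ha2⟩⟩,
            Or.inl rfl⟩
        · have h3 : (a.2, y) ∈ A' := hc.resolve_left h2
          have hfa : f a = (a.2, y) := by simp [hf, h1, h2]
          rw [hfa]
          exact Finset.mem_filter.mpr ⟨Finset.mem_filter.mpr ⟨h3, Or.inr ⟨Finset.mem_compl.mpr ha2, hy⟩⟩,
            Or.inr rfl⟩
    have hinj : Set.InjOn f Fx := by
      intro a ha b hb hab
      replace ha := Finset.mem_coe.mp ha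
      replace hb := Finset.mem_coe.mp hb
      have h1 := hrec a ha
      have h2 := hrec b hb
      rw [hab] at h1
      have h22 : a.2 = b.2 := h2.symm.trans h1 |>.symm
      simp only [hFx, Finset.mem_filter] at ha hb
      exact Prod.ext (ha.2.1.trans hb.2.1.symm) h22
    calc Fx.card ≤ (Fy ∪ By).card := Finset.card_le_card_of_injOn f hmaps hinj
      _ ≤ Fy.card + By.card := Finset.card_union_le _ _
  have hdisjB : Disjoint Bx By := by
    rw [Finset.disjoint_left]
    intro a haBx haBy
    simp only [hBx, hBy, hDst, Finset.mem_filter, Finset.mem_compl] at haBx haBy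
    obtain ⟨⟨hA, hcross⟩, ha1⟩ := haBx
    rcases haBy.2 with h | h
    · exact hxy (ha1.symm.trans h)
    · rcases hcross with ⟨_, h2⟩ | ⟨h1, _⟩
      · exact h2 (h ▸ hy)
      · exact h1 (ha1 ▸ hx)
  have hBsub : Bx ∪ By ⊆ Dst := by
    intro a ha
    rcases Finset.mem_union.mp ha with h | h
    · exact Finset.filter_subset _ _ h
    · exact Finset.filter_subset _ _ h
  have hBcard : Bx.card + By.card ≤ Dst.card := by
    rw [← Finset.card_union_of_disjoint hdisjB]
    exact Finset.card_le_card hBsub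
  have hdd : dstar A' U Uᶜ = Dst.card := rfl
  have h1 := hsplit x
  have h2 := hsplit y
  rw [← hFx, ← hGx] at h1
  rw [← hFy, ← hGy] at h2
  rw [h1, h2, hdd, hGxBx]
  omega

end Aux

end DescPaper


theorem stmt6 {V : Type*} [Fintype V] [DecidableEq V]
    (T A' : Finset (V × V))
    (hT : IsTournament T) (hDESC : IsDESC T A')
    (U : Finset V) (hU : IsStrongComponent (T \ A') U) :
    ∀ x ∈ U, ∀ y ∈ U,
      |(outDegInto T x Uᶜ : ℤ) - outDegInto T y Uᶜ| ≤ dstar A' U Uᶜ := by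
  intro x hx y hy
  have h1 := DescPaper.key_one_sided T A' hT hDESC U hU hx hy
  have h2 := DescPaper.key_one_sided T A' hT hDESC U hU hy hx
  rw [abs_sub_le_iff]
  constructor <;> omega
end

section
/- Let T be a tournament on a finite vertex set, let k be a nonnegative integer, and let A' be a DESC-set of T with |A'| ≤ k. If xy is an arc of T (from x to y) with d⁺_T(y) − d⁺_T(x) > k, then xy ∈ A'. -/
open DescPaper Finset

section Helpers
variable {V : Type*} [Fintype V] [DecidableEq V]

lemma reach_mono_s7 {E E' : Finset (V × V)} (h : E ⊆ E') {u v : V} (huv : Reach E u v) :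
    Reach E' u v := by
  unfold Reach at huv ⊢
  induction huv with
  | refl => exact Relation.ReflTransGen.refl
  | tail _ hbc ih => exact ih.tail (h hbc)

lemma induce_mono (D : Finset (V × V)) {X Y : Finset V} (h : X ⊆ Y) :
    induce D X ⊆ induce D Y := by
  intro a ha
  simp only [induce, mem_filter] at ha ⊢
  exact ⟨ha.1, h ha.2.1, h ha.2.2⟩

lemma sc_singleton (D : Finset (V × V)) (v : V) : StronglyConnectedOn D {v} := by
  intro a ha b hb
  simp only [mem_singleton] at ha hb
  subst ha; subst hb
  exact Relation.ReflTransGen.refl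

lemma exists_component (D : Finset (V × V)) (S : Finset V) (hne : S.Nonempty)
    (hsc : StronglyConnectedOn D S) : ∃ X, IsStrongComponent D X ∧ S ⊆ X := by
  classical
  let F : Finset (Finset V) := univ.filter (fun Y => S ⊆ Y ∧ StronglyConnectedOn D Y)
  have hSF : S ∈ F := by simp [F, hsc]
  obtain ⟨X, hXF, hmax⟩ := F.exists_maximal ⟨S, hSF⟩
  simp only [F, mem_filter, mem_univ, true_and] at hXF
  refine ⟨X, ⟨hne.mono hXF.1, hXF.2, ?_⟩, hXF.1⟩
  intro Y hXY hY
  by_contra hne'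
  exact hne' (le_antisymm (hmax (by simp [F, hXF.1.trans hXY, hY]) hXY) hXY)

lemma keyZ (D : Finset (V × V)) {X : Finset V} {x y z : V}
    (hX : IsStrongComponent D X) (hyX : y ∈ X)
    (hxy : (x, y) ∈ D) (hyz : (y, z) ∈ D) (hzx : (z, x) ∈ D) : x ∈ X ∧ z ∈ X := by
  obtain ⟨hne, hsc, hmax⟩ := hX
  set Y := X ∪ {x, z} with hY
  have hXY : X ⊆ Y := subset_union_left
  have hxY : x ∈ Y := by simp [Y]
  have hzY : z ∈ Y := by simp [Y]
  have hyY : y ∈ Y := hXY hyX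
  have arc : ∀ u v : V, u ∈ Y → v ∈ Y → (u, v) ∈ D → Reach (induce D Y) u v := by
    intro u v hu hv huv
    exact Relation.ReflTransGen.single (by simp [induce, mem_filter, huv, hu, hv])
  have toy : ∀ u ∈ Y, Reach (induce D Y) u y := by
    intro u hu
    rcases mem_union.mp hu with h | h
    · exact reach_mono_s7 (induce_mono D hXY) (hsc u h y hyX)
    · rcases mem_insert.mp h with rfl | h
      · exact arc u y hu hyY hxy
      · simp only [mem_singleton] at h; subst h
        exact (arc u x hu hxY hzx).trans (arc x y hxY hyY hxy)
  have fromy : ∀ v ∈ Y, Reach (induce D Y) y v := by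
    intro v hv
    rcases mem_union.mp hv with h | h
    · exact reach_mono_s7 (induce_mono D hXY) (hsc y hyX v h)
    · rcases mem_insert.mp h with rfl | h
      · exact (arc y z hyY hzY hyz).trans (arc z v hzY hv hzx)
      · simp only [mem_singleton] at h; subst h
        exact arc y v hyY hv hyz
  have hscY : StronglyConnectedOn D Y := fun u hu v hv => (toy u hu).trans (fromy v hv)
  have hYX := hmax Y hXY hscY
  exact ⟨hYX ▸ hxY, hYX ▸ hzY⟩

lemma card_from_pred (E : Finset (V × V)) (v : V) (P : V → Prop) [DecidablePred P] :
    (E.filter (fun a => a.1 = v ∧ P a.2)).card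
      = (univ.filter (fun z => P z ∧ (v, z) ∈ E)).card := by
  rw [← Finset.card_image_of_injOn (f := Prod.snd)
      (s := E.filter (fun a => a.1 = v ∧ P a.2)) ?_]
  · congr 1
    ext z
    simp only [mem_image, mem_filter, mem_univ, true_and]
    constructor
    · rintro ⟨a, ⟨haE, ha1, ha2⟩, rfl⟩
      exact ⟨ha2, by rwa [← ha1]⟩
    · rintro ⟨hP, hE⟩
      exact ⟨(v, z), ⟨hE, rfl, hP⟩, rfl⟩
  · intro a ha b hb hab
    simp only [coe_filter, Set.mem_setOf_eq] at ha hb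
    exact Prod.ext (ha.2.1.trans hb.2.1.symm) hab

lemma card_to_pred (E : Finset (V × V)) (v : V) (P : V → Prop) [DecidablePred P] :
    (E.filter (fun a => a.2 = v ∧ P a.1)).card
      = (univ.filter (fun z => P z ∧ (z, v) ∈ E)).card := by
  rw [← Finset.card_image_of_injOn (f := Prod.fst)
      (s := E.filter (fun a => a.2 = v ∧ P a.1)) ?_]
  · congr 1
    ext z
    simp only [mem_image, mem_filter, mem_univ, true_and]
    constructor
    · rintro ⟨a, ⟨haE, ha1, ha2⟩, rfl⟩
      exact ⟨ha2, by rwa [← ha1]⟩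
    · rintro ⟨hP, hE⟩
      exact ⟨(z, v), ⟨hE, rfl, hP⟩, rfl⟩
  · intro a ha b hb hab
    simp only [coe_filter, Set.mem_setOf_eq] at ha hb
    exact Prod.ext hab (ha.2.1.trans hb.2.1.symm)

lemma card_from' (E : Finset (V × V)) (v : V) :
    (E.filter (fun a => a.1 = v)).card = (univ.filter (fun z => (v, z) ∈ E)).card := by
  have h := card_from_pred E v (fun _ => True)
  simpa using h

lemma card_to' (E : Finset (V × V)) (v : V) :
    (E.filter (fun a => a.2 = v)).card = (univ.filter (fun z => (z, v) ∈ E)).card := by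
  have h := card_to_pred E v (fun _ => True)
  simpa using h

lemma card_choice_le {T A' B : Finset (V × V)} {x y : V} (hloop : ∀ v : V, (v, v) ∉ T)
    (S : Finset V) (hS : ∀ z ∈ S, (y, z) ∈ T ∧ (z, x) ∈ T)
    (hmem : ∀ z ∈ S, (if (y, z) ∈ A' then ((y, z) : V × V) else (z, x)) ∈ B) :
    S.card ≤ B.card := by
  classical
  apply Finset.card_le_card_of_injOn _ hmem
  intro a ha b hb hab
  simp only [mem_coe] at ha hb
  have hax : a ≠ x := fun h => hloop x (h ▸ (hS a ha).2)
  have hby : b ≠ y := fun h => hloop y (h ▸ (hS b hb).1)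
  have hay : a ≠ y := fun h => hloop y (h ▸ (hS a ha).1)
  have hbx : b ≠ x := fun h => hloop x (h ▸ (hS b hb).2)
  dsimp only at hab
  split_ifs at hab with h1 h2 h2 <;> simp only [Prod.mk.injEq] at hab <;> tauto

end Helpers
set_option maxHeartbeats 1000000 in
theorem stmt7 {V : Type*} [Fintype V] [DecidableEq V]
    (T A' : Finset (V × V)) (k : ℕ)
    (hT : IsTournament T) (hDESC : IsDESC T A') (hk : A'.card ≤ k)
    (x y : V) (hxy : (x, y) ∈ T)
    (hdeg : (k : ℤ) < (outDeg T y : ℤ) - outDeg T x) :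
    (x, y) ∈ A' := by
  classical
  by_contra hA
  obtain ⟨hloop, hpair⟩ := hT
  have hxyne : x ≠ y := by rintro rfl; exact hloop x hxy
  have hyx : (y, x) ∉ T := (hpair x y hxyne).mp hxy
  have hknat : k + outDeg T x < outDeg T y := by
    have h : (k : ℤ) + outDeg T x < outDeg T y := by linarith
    exact_mod_cast h
  set D := T \ A' with hDdef
  have hxyD : (x, y) ∈ D := mem_sdiff.mpr ⟨hxy, hA⟩
  have hA'T : A' ⊆ T := hDESC.1
  obtain ⟨X, hX, hySub⟩ := exists_component D {y} (singleton_nonempty y) (sc_singleton D y)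
  have hyX : y ∈ X := hySub (mem_singleton_self y)
  have keyz : ∀ z : V, (y, z) ∈ T → (z, x) ∈ T → (z ∉ X ∨ x ∉ X) →
      (y, z) ∈ A' ∨ (z, x) ∈ A' := by
    intro z hyz hzx hor
    by_contra hcon
    push_neg at hcon
    have h1 : (y, z) ∈ D := mem_sdiff.mpr ⟨hyz, hcon.1⟩
    have h2 : (z, x) ∈ D := mem_sdiff.mpr ⟨hzx, hcon.2⟩
    obtain ⟨hxX, hzX⟩ := keyZ D hX hyX hxyD h1 h2
    rcases hor with h | h
    · exact h hzX
    · exact h hxX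
  have houty : outDeg T y = (univ.filter (fun z => (y, z) ∈ T)).card := card_from' T y
  have houtx : outDeg T x = (univ.filter (fun z => (x, z) ∈ T)).card := card_from' T x
  by_cases hxX : x ∈ X
  · -- Case 1 : x and y in the same strong component X
    have hbal : IsBalanced (induce D X) := (hDESC.2 X hX).2
    set py := (univ.filter (fun z => z ∈ X ∧ (y, z) ∈ T)).card with hpy
    set qy := (univ.filter (fun z => z ∈ X ∧ (z, y) ∈ T)).card with hqy
    set px := (univ.filter (fun z => z ∈ X ∧ (x, z) ∈ T)).card with hpx
    set qx := (univ.filter (fun z => z ∈ X ∧ (z, x) ∈ T)).card with hqx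
    set apy := (univ.filter (fun z => z ∈ X ∧ (y, z) ∈ A')).card with hapy
    set amy := (univ.filter (fun z => z ∈ X ∧ (z, y) ∈ A')).card with hamy
    set apx := (univ.filter (fun z => z ∈ X ∧ (x, z) ∈ A')).card with hapx
    set amx := (univ.filter (fun z => z ∈ X ∧ (z, x) ∈ A')).card with hamx
    set oy := (univ.filter (fun z => z ∉ X ∧ (y, z) ∈ T)).card with hoy
    set ox := (univ.filter (fun z => z ∉ X ∧ (x, z) ∈ T)).card with hox
    set Wset := univ.filter (fun z => z ∉ X ∧ (y, z) ∈ T ∧ (z, x) ∈ T) with hWset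
    set AOut := A'.filter (fun a => (a.1 = y ∧ a.2 ∉ X) ∨ (a.2 = x ∧ a.1 ∉ X)) with hAOut
    -- split of the out-degree
    have hsplit : ∀ v : V, (univ.filter (fun z => (v, z) ∈ T)).card
        = (univ.filter (fun z => z ∈ X ∧ (v, z) ∈ T)).card
          + (univ.filter (fun z => z ∉ X ∧ (v, z) ∈ T)).card := by
      intro v
      rw [← card_union_of_disjoint]
      · congr 1
        ext z
        simp only [mem_union, mem_filter, mem_univ, true_and]
        tauto
      · rw [disjoint_left]
        intro a h1 h2
        simp only [mem_filter, mem_univ, true_and] at h1 h2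
        exact h2.1 h1.1
    have h1 : outDeg T y = py + oy := by rw [houty, hsplit y]
    have h2 : outDeg T x = px + ox := by rw [houtx, hsplit x]
    -- tournament count inside X
    have htour : ∀ v ∈ X, (univ.filter (fun z => z ∈ X ∧ (v, z) ∈ T)).card
        + (univ.filter (fun z => z ∈ X ∧ (z, v) ∈ T)).card + 1 = X.card := by
      intro v hv
      have hdis : Disjoint (univ.filter (fun z => z ∈ X ∧ (v, z) ∈ T))
          (univ.filter (fun z => z ∈ X ∧ (z, v) ∈ T)) := by
        rw [disjoint_left]
        intro a ha1 ha2
        simp only [mem_filter, mem_univ, true_and] at ha1 ha2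
        have hav : a ≠ v := by rintro rfl; exact hloop a ha1.2
        exact (hpair v a (Ne.symm hav)).mp ha1.2 ha2.2
      have hun : (univ.filter (fun z => z ∈ X ∧ (v, z) ∈ T))
          ∪ (univ.filter (fun z => z ∈ X ∧ (z, v) ∈ T)) = X.erase v := by
        ext z
        simp only [mem_union, mem_filter, mem_univ, true_and, mem_erase]
        constructor
        · rintro (⟨hzX, hT1⟩ | ⟨hzX, hT1⟩)
          · exact ⟨by rintro rfl; exact hloop z hT1, hzX⟩
          · exact ⟨by rintro rfl; exact hloop z hT1, hzX⟩
        · rintro ⟨hzv, hzX⟩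
          by_cases hvz : (v, z) ∈ T
          · exact Or.inl ⟨hzX, hvz⟩
          · exact Or.inr ⟨hzX, (hpair z v hzv).mpr hvz⟩
      rw [← card_union_of_disjoint hdis, hun, card_erase_of_mem hv]
      have : 0 < X.card := card_pos.mpr ⟨v, hv⟩
      omega
    have h3 := htour y hyX
    have h4 := htour x hxX
    -- balance equations
    have hbalv : ∀ v ∈ X,
        (univ.filter (fun z => z ∈ X ∧ (v, z) ∈ T)).card
          - (univ.filter (fun z => z ∈ X ∧ (v, z) ∈ A')).card
        = (univ.filter (fun z => z ∈ X ∧ (z, v) ∈ T)).card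
          - (univ.filter (fun z => z ∈ X ∧ (z, v) ∈ A')).card
        ∧ (univ.filter (fun z => z ∈ X ∧ (v, z) ∈ A')).card
            ≤ (univ.filter (fun z => z ∈ X ∧ (v, z) ∈ T)).card
        ∧ (univ.filter (fun z => z ∈ X ∧ (z, v) ∈ A')).card
            ≤ (univ.filter (fun z => z ∈ X ∧ (z, v) ∈ T)).card := by
      intro v hv
      have hsubF : (univ.filter (fun z => z ∈ X ∧ (v, z) ∈ A'))
          ⊆ (univ.filter (fun z => z ∈ X ∧ (v, z) ∈ T)) := by
        intro z hz
        simp only [mem_filter, mem_univ, true_and] at hz ⊢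
        exact ⟨hz.1, hA'T hz.2⟩
      have hsubT : (univ.filter (fun z => z ∈ X ∧ (z, v) ∈ A'))
          ⊆ (univ.filter (fun z => z ∈ X ∧ (z, v) ∈ T)) := by
        intro z hz
        simp only [mem_filter, mem_univ, true_and] at hz ⊢
        exact ⟨hz.1, hA'T hz.2⟩
      refine ⟨?_, card_le_card hsubF, card_le_card hsubT⟩
      have hout : outDeg (induce D X) v
          = (univ.filter (fun z => z ∈ X ∧ (v, z) ∈ T)).card
            - (univ.filter (fun z => z ∈ X ∧ (v, z) ∈ A')).card := by
        rw [outDeg, card_from']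
        rw [← card_sdiff_of_subset hsubF]
        congr 1
        ext z
        simp only [mem_sdiff, mem_filter, mem_univ, true_and, induce, hDdef, mem_sdiff]
        constructor
        · rintro ⟨⟨hTm, hAm⟩, hvX, hzX⟩
          exact ⟨⟨hzX, hTm⟩, fun h => hAm h.2⟩
        · rintro ⟨⟨hzX, hTm⟩, hAm⟩
          exact ⟨⟨hTm, fun h => hAm ⟨hzX, h⟩⟩, hv, hzX⟩
      have hin : inDeg (induce D X) v
          = (univ.filter (fun z => z ∈ X ∧ (z, v) ∈ T)).card
            - (univ.filter (fun z => z ∈ X ∧ (z, v) ∈ A')).card := by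
        rw [inDeg, card_to']
        rw [← card_sdiff_of_subset hsubT]
        congr 1
        ext z
        simp only [mem_sdiff, mem_filter, mem_univ, true_and, induce, hDdef, mem_sdiff]
        constructor
        · rintro ⟨⟨hTm, hAm⟩, hzX, hvX⟩
          exact ⟨⟨hzX, hTm⟩, fun h => hAm h.2⟩
        · rintro ⟨⟨hzX, hTm⟩, hAm⟩
          exact ⟨⟨hTm, fun h => hAm ⟨hzX, h⟩⟩, hzX, hv⟩
      rw [← hout, ← hin]
      exact hbal v
    obtain ⟨h5, h5a, h5b⟩ := hbalv y hyX
    obtain ⟨h6, h6a, h6b⟩ := hbalv x hxX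
    -- oy ≤ ox + |Wset|
    have h7 : oy ≤ ox + Wset.card := by
      calc oy ≤ ((univ.filter (fun z => z ∉ X ∧ (x, z) ∈ T)) ∪ Wset).card := by
            rw [hoy]
            apply card_le_card
            intro z hz
            simp only [mem_filter, mem_univ, true_and] at hz
            by_cases h : (x, z) ∈ T
            · simp only [mem_union, mem_filter, mem_univ, true_and]
              exact Or.inl ⟨hz.1, h⟩
            · have hzxne : z ≠ x := by rintro rfl; exact hz.1 hxX
              have hzx : (z, x) ∈ T := (hpair z x hzxne).mpr h
              simp only [hWset, mem_union, mem_filter, mem_univ, true_and]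
              exact Or.inr ⟨hz.1, hz.2, hzx⟩
        _ ≤ ox + Wset.card := by rw [hox]; exact card_union_le _ _
    have h8 : Wset.card ≤ AOut.card := by
      refine card_choice_le (A' := A') (B := AOut) (x := x) (y := y) hloop Wset ?_ ?_
      · intro z hz
        simp only [hWset, mem_filter, mem_univ, true_and] at hz
        exact hz.2
      · intro z hz
        simp only [hWset, mem_filter, mem_univ, true_and] at hz
        have h := keyz z hz.2.1 hz.2.2 (Or.inl hz.1)
        split_ifs with hif
        · exact mem_filter.mpr ⟨hif, Or.inl ⟨rfl, hz.1⟩⟩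
        · exact mem_filter.mpr ⟨h.resolve_left hif, Or.inr ⟨rfl, hz.1⟩⟩
    have hc1 : apy = (A'.filter (fun a => a.1 = y ∧ a.2 ∈ X)).card := by
      rw [hapy]; exact (card_from_pred A' y (fun z => z ∈ X)).symm
    have hc2 : amx = (A'.filter (fun a => a.2 = x ∧ a.1 ∈ X)).card := by
      rw [hamx]; exact (card_to_pred A' x (fun z => z ∈ X)).symm
    have h9 : apy + amx + AOut.card ≤ A'.card := by
      rw [hc1, hc2]
      set E1 := A'.filter (fun a => a.1 = y ∧ a.2 ∈ X) with hE1
      set E2 := A'.filter (fun a => a.2 = x ∧ a.1 ∈ X) with hE2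
      have h12 : Disjoint E1 E2 := by
        rw [disjoint_left]; intro a h1 h2
        simp only [hE1, hE2, mem_filter] at h1 h2
        have ha : a = (y, x) := Prod.ext h1.2.1 h2.2.1
        exact hyx (ha ▸ hA'T h1.1)
      have h13 : Disjoint E1 AOut := by
        rw [disjoint_left]; intro a h1 h2
        simp only [hE1, hAOut, mem_filter] at h1 h2
        rcases h2.2 with ⟨_, h⟩ | ⟨_, h⟩
        · exact h h1.2.2
        · exact h (by rw [h1.2.1]; exact hyX)
      have h23 : Disjoint E2 AOut := by
        rw [disjoint_left]; intro a h1 h2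
        simp only [hE2, hAOut, mem_filter] at h1 h2
        rcases h2.2 with ⟨_, h⟩ | ⟨_, h⟩
        · exact h (by rw [h1.2.1]; exact hxX)
        · exact h h1.2.2
      have hunion : Disjoint (E1 ∪ E2) AOut := disjoint_union_left.mpr ⟨h13, h23⟩
      calc E1.card + E2.card + AOut.card = ((E1 ∪ E2) ∪ AOut).card := by
            rw [card_union_of_disjoint hunion, card_union_of_disjoint h12]
        _ ≤ A'.card := card_le_card (by
            intro a ha
            simp only [mem_union, hE1, hE2, hAOut, mem_filter] at ha
            rcases ha with (h | h) | h <;> exact h.1)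
    omega
  · -- Case 2 : x not in the strong component of y
    set Wset := univ.filter (fun z => (y, z) ∈ T ∧ (z, x) ∈ T) with hWset
    have hsub : univ.filter (fun z => (y, z) ∈ T)
        ⊆ univ.filter (fun z => (x, z) ∈ T) ∪ Wset := by
      intro z hz
      simp only [mem_filter, mem_univ, true_and] at hz
      by_cases h : (x, z) ∈ T
      · simp only [mem_union, mem_filter, mem_univ, true_and]; exact Or.inl h
      · have hzxne : z ≠ x := by rintro rfl; exact hyx hz
        have hzx : (z, x) ∈ T := (hpair z x hzxne).mpr h
        simp only [hWset, mem_union, mem_filter, mem_univ, true_and]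
        exact Or.inr ⟨hz, hzx⟩
    have hcardW : Wset.card ≤ A'.card := by
      refine card_choice_le (A' := A') (B := A') (x := x) (y := y) hloop Wset ?_ ?_
      · intro z hz
        simp only [hWset, mem_filter, mem_univ, true_and] at hz
        exact hz
      · intro z hz
        simp only [hWset, mem_filter, mem_univ, true_and] at hz
        have h := keyz z hz.1 hz.2 (Or.inr hxX)
        split_ifs with hif
        · exact hif
        · exact h.resolve_left hif
    have hfin : outDeg T y ≤ outDeg T x + Wset.card := by
      rw [houty, houtx]
      calc (univ.filter (fun z => (y, z) ∈ T)).card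
          ≤ ((univ.filter (fun z => (x, z) ∈ T)) ∪ Wset).card := card_le_card hsub
        _ ≤ _ := card_union_le _ _
    omega
end

section
/- Let T be a tournament on a finite vertex set, let k be a nonnegative integer, and let A' be a DESC-set of T with |A'| ≤ k. If P is a directed path in T from a vertex x to a vertex y with d⁺_T(y) − d⁺_T(x) > k, then at least one arc of P belongs to A'. -/
set_option linter.unusedSectionVars false
set_option linter.unusedVariables false

open DescPaper

/-! ### Auxiliary lemmas -/

namespace DescPaper

variable {V : Type*} [Fintype V] [DecidableEq V]

open Finset

lemma outDeg_eq' (D : Finset (V × V)) (v : V) :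
    outDeg D v = (univ.filter fun w => (v, w) ∈ D).card := by
  classical
  unfold outDeg
  apply Finset.card_bij (fun a _ => a.2)
  · intro a ha
    simp only [mem_filter, mem_univ, true_and] at ha ⊢
    obtain ⟨h1, h2⟩ := ha
    rwa [← h2, Prod.mk.eta]
  · intro a ha b hb hab
    simp only [mem_filter] at ha hb
    exact Prod.ext (ha.2.trans hb.2.symm) hab
  · intro w hw
    simp only [mem_filter, mem_univ, true_and] at hw
    exact ⟨(v, w), by simp [hw], rfl⟩

lemma inDeg_eq' (D : Finset (V × V)) (v : V) :
    inDeg D v = (univ.filter fun w => (w, v) ∈ D).card := by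
  classical
  unfold inDeg
  apply Finset.card_bij (fun a _ => a.1)
  · intro a ha
    simp only [mem_filter, mem_univ, true_and] at ha ⊢
    obtain ⟨h1, h2⟩ := ha
    rwa [← h2, Prod.mk.eta]
  · intro a ha b hb hab
    simp only [mem_filter] at ha hb
    exact Prod.ext hab (ha.2.trans hb.2.symm)
  · intro w hw
    simp only [mem_filter, mem_univ, true_and] at hw
    exact ⟨(w, v), by simp [hw], rfl⟩

lemma reach_mono_induce {D : Finset (V × V)} {X : Finset V} {u v : V}
    (h : Reach (induce D X) u v) : Reach D u v :=
  by
    unfold Reach at h ⊢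
    induction h with
    | refl => exact Relation.ReflTransGen.refl
    | tail _ hab ih => exact ih.tail (Finset.mem_filter.mp hab).1

lemma reach_induce_aux {D : Finset (V × V)} {x : V} {X : Finset V}
    (hX : ∀ v, v ∈ X ↔ Reach D x v ∧ Reach D v x) {u w : V}
    (h : Reach D u w) (hwx : Reach D w x) :
    Reach D x u → Reach (induce D X) u w := by
  unfold Reach at h
  induction h using Relation.ReflTransGen.head_induction_on with
  | refl => intro _; exact Relation.ReflTransGen.refl
  | head hab hbw ih =>
    rename_i a b
    intro hxa
    have hxb : Reach D x b := hxa.tail hab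
    have hbx : Reach D b x := Relation.ReflTransGen.trans hbw hwx
    have hax : Reach D a x := Relation.ReflTransGen.trans (Relation.ReflTransGen.single hab) hbx
    have haX : a ∈ X := (hX a).2 ⟨hxa, hax⟩
    have hbX : b ∈ X := (hX b).2 ⟨hxb, hbx⟩
    refine Relation.ReflTransGen.head ?_ (ih hxb)
    simp only [induce, Finset.mem_filter]
    exact ⟨hab, haX, hbX⟩

lemma comp_isStrongComponent {D : Finset (V × V)} {x : V} {X : Finset V}
    (hX : ∀ v, v ∈ X ↔ Reach D x v ∧ Reach D v x) :
    IsStrongComponent D X := by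
  have hxX : x ∈ X := (hX x).2 ⟨Relation.ReflTransGen.refl, Relation.ReflTransGen.refl⟩
  refine ⟨⟨x, hxX⟩, ?_, ?_⟩
  · intro u hu w hw
    have hu' := (hX u).1 hu
    have hw' := (hX w).1 hw
    exact reach_induce_aux hX (Relation.ReflTransGen.trans hu'.2 hw'.1) hw'.2 hu'.1
  · intro Y hXY hY
    refine Finset.Subset.antisymm ?_ hXY
    intro v hv
    have h1 : Reach (induce D Y) x v := hY x (hXY hxX) v hv
    have h2 : Reach (induce D Y) v x := hY v hv x (hXY hxX)
    exact (hX v).2 ⟨reach_mono_induce h1, reach_mono_induce h2⟩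

lemma balance_card {T A' : Finset (V × V)} (hT : IsTournament T) (hA : A' ⊆ T)
    {C : Finset V} (hbal : IsBalanced (induce (T \ A') C)) {v : V} (hv : v ∈ C) :
    2 * (C.filter fun w => (v, w) ∈ T ∧ (v, w) ∉ A').card
      + (C.filter fun w => w ≠ v ∧ ((v, w) ∈ A' ∨ (w, v) ∈ A')).card + 1 = C.card := by
  classical
  set O := C.filter fun w => (v, w) ∈ T ∧ (v, w) ∉ A' with hO
  set I := C.filter fun w => (w, v) ∈ T ∧ (w, v) ∉ A' with hI
  set M := C.filter fun w => w ≠ v ∧ ((v, w) ∈ A' ∨ (w, v) ∈ A') with hM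
  have hOcard : O.card = outDeg (induce (T \ A') C) v := by
    rw [outDeg_eq']
    congr 1
    ext w
    simp only [hO, mem_filter, mem_univ, true_and, induce, mem_sdiff]
    constructor
    · rintro ⟨hw, h1, h2⟩; exact ⟨⟨h1, h2⟩, hv, hw⟩
    · rintro ⟨⟨h1, h2⟩, _, hw⟩; exact ⟨hw, h1, h2⟩
  have hIcard : I.card = inDeg (induce (T \ A') C) v := by
    rw [inDeg_eq']
    congr 1
    ext w
    simp only [hI, mem_filter, mem_univ, true_and, induce, mem_sdiff]
    constructor
    · rintro ⟨hw, h1, h2⟩; exact ⟨⟨h1, h2⟩, hw, hv⟩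
    · rintro ⟨⟨h1, h2⟩, hw, _⟩; exact ⟨hw, h1, h2⟩
  have hOI : O.card = I.card := by rw [hOcard, hIcard, hbal v]
  have hcover : C.erase v = O ∪ I ∪ M := by
    ext w
    simp only [mem_erase, hO, hI, hM, mem_union, mem_filter]
    constructor
    · rintro ⟨hwv, hw⟩
      by_cases h1 : (v, w) ∈ T
      · by_cases h2 : (v, w) ∈ A'
        · exact Or.inr ⟨hw, hwv, Or.inl h2⟩
        · exact Or.inl (Or.inl ⟨hw, h1, h2⟩)
      · have h3 : (w, v) ∈ T := by
          by_contra h4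
          exact h1 ((hT.2 v w (Ne.symm hwv)).mpr h4)
        by_cases h2 : (w, v) ∈ A'
        · exact Or.inr ⟨hw, hwv, Or.inr h2⟩
        · exact Or.inl (Or.inr ⟨hw, h3, h2⟩)
    · rintro ((⟨hw, h1, _⟩ | ⟨hw, h1, _⟩) | ⟨hw, h1, _⟩)
      · exact ⟨fun h => hT.1 v (by rw [h] at h1; exact h1), hw⟩
      · exact ⟨fun h => hT.1 v (by rw [h] at h1; exact h1), hw⟩
      · exact ⟨h1, hw⟩
  have hd1 : Disjoint O I := by
    rw [Finset.disjoint_left]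
    rintro w hw hw'
    simp only [hO, hI, mem_filter] at hw hw'
    have hwv : v ≠ w := by rintro rfl; exact hT.1 v hw.2.1
    exact ((hT.2 v w hwv).mp hw.2.1) hw'.2.1
  have hd2 : Disjoint (O ∪ I) M := by
    rw [Finset.disjoint_left]
    rintro w hw hw'
    simp only [hO, hI, hM, mem_union, mem_filter] at hw hw'
    obtain ⟨_, hwv, hA'⟩ := hw'
    rcases hw with ⟨_, h1, h2⟩ | ⟨_, h1, h2⟩
    · rcases hA' with h | h
      · exact h2 h
      · have hwv' : v ≠ w := fun hh => by subst hh; exact hT.1 v h1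
        exact ((hT.2 v w hwv').mp h1) (hA h)
    · rcases hA' with h | h
      · have hwv' : w ≠ v := hwv
        exact ((hT.2 w v hwv').mp h1) (hA h)
      · exact h2 h
  have hcard : (C.erase v).card = O.card + I.card + M.card := by
    rw [hcover, Finset.card_union_of_disjoint hd2, Finset.card_union_of_disjoint hd1]
  have herase : (C.erase v).card = C.card - 1 := Finset.card_erase_of_mem hv
  have hpos : 1 ≤ C.card := Finset.card_pos.mpr ⟨v, hv⟩
  omega

lemma reach_of_path {D A' : Finset (V × V)} :
    ∀ (p : List V) (x y : V), List.Chain' (fun u v => (u, v) ∈ D) p →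
      (∀ a ∈ p.zip p.tail, a ∉ A') →
      p.head? = some x → p.getLast? = some y → Reach (D \ A') x y := by
  intro p
  induction p with
  | nil => intro x y _ _ h _; simp at h
  | cons a t ih =>
    intro x y hc hz hh hl
    simp only [List.head?_cons, Option.some.injEq] at hh
    subst hh
    cases t with
    | nil =>
      simp only [List.getLast?_singleton, Option.some.injEq] at hl
      subst hl
      exact Relation.ReflTransGen.refl
    | cons b l =>
      simp only [List.Chain', List.isChain_cons_cons] at hc
      rw [List.getLast?_cons_cons] at hl
      have hab : (a, b) ∉ A' := hz (a, b) (by simp)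
      refine Relation.ReflTransGen.head (Finset.mem_sdiff.mpr ⟨hc.1, hab⟩) ?_
      have hz' : ∀ q ∈ (b :: l).zip (b :: l).tail, q ∉ A' := by
        intro q hq
        apply hz
        simp only [List.tail_cons] at hq ⊢
        rw [List.zip_cons_cons]
        exact List.mem_cons_of_mem _ hq
      exact ih b y hc.2 hz' rfl hl

end DescPaper

/-- A directed path is given by its (nonempty, repetition-free)
list of vertices `p`, consecutive vertices being joined by arcs of `T`;
its arcs are the pairs in `p.zip p.tail`. -/
theorem stmt8 {V : Type*} [Fintype V] [DecidableEq V]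
    (T A' : Finset (V × V)) (k : ℕ)
    (hT : IsTournament T) (hDESC : IsDESC T A') (hk : A'.card ≤ k)
    (x y : V) (p : List V)
    (hchain : List.Chain' (fun u v => (u, v) ∈ T) p)
    (hnodup : p.Nodup)
    (hhead : p.head? = some x) (hlast : p.getLast? = some y)
    (hdeg : (k : ℤ) < (outDeg T y : ℤ) - outDeg T x) :
    ∃ a ∈ p.zip p.tail, a ∈ A' := by
  classical
  by_contra hcon
  push_neg at hcon
  have hA : A' ⊆ T := hDESC.1
  set D := T \ A' with hD
  have hxy : Reach D x y := reach_of_path p x y hchain hcon hhead hlast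
  have hxyne : x ≠ y := by rintro rfl; omega
  set S : Finset V := Finset.univ.filter (fun v => Reach D y v) with hS
  set Rc : Finset V := Finset.univ.filter (fun v => ¬ Reach D v x) with hRc
  set Cx : Finset V := Finset.univ.filter (fun v => Reach D x v ∧ Reach D v x) with hCx
  set Cy : Finset V := Finset.univ.filter (fun v => Reach D y v ∧ Reach D v y) with hCy
  have mem_S : ∀ v, v ∈ S ↔ Reach D y v := fun v => by simp [hS]
  have mem_Rc : ∀ v, v ∈ Rc ↔ ¬ Reach D v x := fun v => by simp [hRc]
  have mem_Cx : ∀ v, v ∈ Cx ↔ Reach D x v ∧ Reach D v x := fun v => by simp [hCx]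
  have mem_Cy : ∀ v, v ∈ Cy ↔ Reach D y v ∧ Reach D v y := fun v => by simp [hCy]
  have hxCx : x ∈ Cx := (mem_Cx x).2 ⟨Relation.ReflTransGen.refl, Relation.ReflTransGen.refl⟩
  have hyCy : y ∈ Cy := (mem_Cy y).2 ⟨Relation.ReflTransGen.refl, Relation.ReflTransGen.refl⟩
  have hbalX : IsBalanced (induce D Cx) := (hDESC.2 Cx (comp_isStrongComponent mem_Cx)).2
  have hbalY : IsBalanced (induce D Cy) := (hDESC.2 Cy (comp_isStrongComponent mem_Cy)).2
  set Ny := Finset.univ.filter (fun w => (y, w) ∈ T) with hNy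
  set Nx := Finset.univ.filter (fun w => (x, w) ∈ T) with hNx
  have hdy : outDeg T y = Ny.card := outDeg_eq' T y
  have hdx : outDeg T x = Nx.card := outDeg_eq' T x
  set Oy := Cy.filter (fun w => (y, w) ∈ T ∧ (y, w) ∉ A') with hOy
  set Ox := Cx.filter (fun w => (x, w) ∈ T ∧ (x, w) ∉ A') with hOx
  set My := Cy.filter (fun w => w ≠ y ∧ ((y, w) ∈ A' ∨ (w, y) ∈ A')) with hMy
  set Mx := Cx.filter (fun w => w ≠ x ∧ ((x, w) ∈ A' ∨ (w, x) ∈ A')) with hMx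
  set NyC := Cy.filter (fun w => (y, w) ∈ T) with hNyC
  set Ay := Finset.univ.filter (fun w => ¬ Reach D y w ∧ (y, w) ∈ A') with hAy
  set Bx := Finset.univ.filter (fun w => ¬ Reach D w x ∧ (w, x) ∈ A') with hBx
  set FA := A'.filter (fun a => a.1 = y ∧ ¬ Reach D y a.2) with hFA
  set FB := A'.filter (fun a => a.2 = x ∧ ¬ Reach D a.1 x) with hFB
  set FMy := A'.filter (fun a => (a.1 = y ∧ a.2 ∈ Cy) ∨ (a.2 = y ∧ a.1 ∈ Cy)) with hFMy
  set FMx := A'.filter (fun a => (a.1 = x ∧ a.2 ∈ Cx) ∨ (a.2 = x ∧ a.1 ∈ Cx)) with hFMx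
  have hbeqY : 2 * Oy.card + My.card + 1 = Cy.card := by
    rw [hOy, hMy]; exact balance_card hT hA hbalY hyCy
  have hbeqX : 2 * Ox.card + Mx.card + 1 = Cx.card := by
    rw [hOx, hMx]; exact balance_card hT hA hbalX hxCx
  -- (1) upper bound on the out-neighbourhood of y
  have hcov1 : Ny ⊆ NyC ∪ (S \ Cy) ∪ Ay := by
    intro w hw
    have hwT : (y, w) ∈ T := by simpa [hNy] using hw
    simp only [Finset.mem_union, hNyC, hAy, Finset.mem_filter, Finset.mem_univ, true_and,
      Finset.mem_sdiff]
    by_cases hreach : Reach D y w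
    · by_cases hback : Reach D w y
      · exact Or.inl (Or.inl ⟨(mem_Cy w).2 ⟨hreach, hback⟩, hwT⟩)
      · exact Or.inl (Or.inr ⟨(mem_S w).2 hreach, fun hcy => hback ((mem_Cy w).1 hcy).2⟩)
    · refine Or.inr ⟨hreach, ?_⟩
      by_contra hA2
      exact hreach (Relation.ReflTransGen.single (Finset.mem_sdiff.mpr ⟨hwT, hA2⟩))
  have h1 : Ny.card ≤ NyC.card + (S \ Cy).card + Ay.card := by
    calc Ny.card ≤ (NyC ∪ (S \ Cy) ∪ Ay).card := Finset.card_le_card hcov1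
    _ ≤ (NyC ∪ (S \ Cy)).card + Ay.card := Finset.card_union_le _ _
    _ ≤ NyC.card + (S \ Cy).card + Ay.card := by
        have := Finset.card_union_le NyC (S \ Cy); omega
  -- (2) split the neighbourhood of y inside Cy
  have h2 : NyC.card ≤ Oy.card + My.card := by
    have hsub : NyC ⊆ Oy ∪ My := by
      intro w hw
      simp only [hNyC, Finset.mem_filter] at hw
      simp only [Finset.mem_union, hOy, hMy, Finset.mem_filter]
      by_cases hA2 : (y, w) ∈ A'
      · refine Or.inr ⟨hw.1, ?_, Or.inl hA2⟩
        intro hh; rw [hh] at hw; exact hT.1 y hw.2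
      · exact Or.inl ⟨hw.1, hw.2, hA2⟩
    calc NyC.card ≤ (Oy ∪ My).card := Finset.card_le_card hsub
    _ ≤ Oy.card + My.card := Finset.card_union_le _ _
  -- (5) lower bound on the out-neighbourhood of x
  have h5a : Ox.card + (Rc \ Bx).card ≤ Nx.card := by
    have hdisj : Disjoint Ox (Rc \ Bx) := by
      rw [Finset.disjoint_left]
      intro w hw hw'
      simp only [hOx, Finset.mem_filter] at hw
      have := ((mem_Cx w).1 hw.1).2
      simp only [Finset.mem_sdiff] at hw'
      exact ((mem_Rc w).1 hw'.1) this
    rw [← Finset.card_union_of_disjoint hdisj]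
    apply Finset.card_le_card
    intro w hw
    simp only [Finset.mem_union, hOx, Finset.mem_filter, Finset.mem_sdiff] at hw
    simp only [hNx, Finset.mem_filter, Finset.mem_univ, true_and]
    rcases hw with ⟨_, h, _⟩ | ⟨hw1, hw2⟩
    · exact h
    · have hnr : ¬ Reach D w x := (mem_Rc w).1 hw1
      have hwA : (w, x) ∉ A' := by
        intro hcA
        apply hw2
        simp only [hBx, Finset.mem_filter, Finset.mem_univ, true_and]
        exact ⟨hnr, hcA⟩
      have hwx : w ≠ x := by rintro rfl; exact hnr Relation.ReflTransGen.refl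
      by_contra hxw
      have hwxT : (w, x) ∈ T := (hT.2 w x hwx).mpr hxw
      exact hnr (Relation.ReflTransGen.single (Finset.mem_sdiff.mpr ⟨hwxT, hwA⟩))
  have h5b : Rc.card ≤ (Rc \ Bx).card + Bx.card := by
    calc Rc.card ≤ ((Rc \ Bx) ∪ Bx).card := Finset.card_le_card (by
          intro w hw
          simp only [Finset.mem_union, Finset.mem_sdiff]
          by_cases h : w ∈ Bx
          · exact Or.inr h
          · exact Or.inl ⟨hw, h⟩)
    _ ≤ (Rc \ Bx).card + Bx.card := Finset.card_union_le _ _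
  -- injections from vertex sets into arc sets
  have hAyFA : Ay.card ≤ FA.card := by
    apply Finset.card_le_card_of_injOn (fun w => (y, w))
    · intro w hw
      simp only [hAy, Finset.mem_coe, Finset.mem_filter, Finset.mem_univ, true_and] at hw
      rw [hFA, Finset.mem_coe, Finset.mem_filter]
      exact ⟨hw.2, rfl, hw.1⟩
    · intro w1 _ w2 _ h
      exact (Prod.mk.injEq _ _ _ _).mp h |>.2
  have hBxFB : Bx.card ≤ FB.card := by
    apply Finset.card_le_card_of_injOn (fun w => (w, x))
    · intro w hw
      simp only [hBx, Finset.mem_coe, Finset.mem_filter, Finset.mem_univ, true_and] at hw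
      rw [hFB, Finset.mem_coe, Finset.mem_filter]
      exact ⟨hw.2, rfl, hw.1⟩
    · intro w1 _ w2 _ h
      exact (Prod.mk.injEq _ _ _ _).mp h |>.1
  have hMyFMy : My.card ≤ FMy.card := by
    apply Finset.card_le_card_of_injOn (fun w => if (y, w) ∈ A' then (y, w) else (w, y))
    · intro w hw
      simp only [hMy, Finset.mem_coe, Finset.mem_filter] at hw
      obtain ⟨hwC, hwy, hor⟩ := hw
      by_cases h : (y, w) ∈ A'
      · simp only [if_pos h]; rw [hFMy, Finset.mem_coe, Finset.mem_filter]
        exact ⟨h, Or.inl ⟨rfl, hwC⟩⟩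
      · have h' : (w, y) ∈ A' := hor.resolve_left h
        simp only [if_neg h]; rw [hFMy, Finset.mem_coe, Finset.mem_filter]
        exact ⟨h', Or.inr ⟨rfl, hwC⟩⟩
    · intro w1 hw1 w2 hw2 heq
      simp only [hMy, Finset.coe_filter, Set.mem_setOf_eq] at hw1 hw2
      dsimp only at heq
      by_cases c1 : (y, w1) ∈ A' <;> by_cases c2 : (y, w2) ∈ A'
      · rw [if_pos c1, if_pos c2] at heq
        exact ((Prod.mk.injEq _ _ _ _).mp heq).2
      · rw [if_pos c1, if_neg c2] at heq
        exact absurd ((Prod.mk.injEq _ _ _ _).mp heq).1.symm hw2.2.1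
      · rw [if_neg c1, if_pos c2] at heq
        exact absurd ((Prod.mk.injEq _ _ _ _).mp heq).1 hw1.2.1
      · rw [if_neg c1, if_neg c2] at heq
        exact ((Prod.mk.injEq _ _ _ _).mp heq).1
  have hMxFMx : Mx.card ≤ FMx.card := by
    apply Finset.card_le_card_of_injOn (fun w => if (x, w) ∈ A' then (x, w) else (w, x))
    · intro w hw
      simp only [hMx, Finset.mem_coe, Finset.mem_filter] at hw
      obtain ⟨hwC, hwx, hor⟩ := hw
      by_cases h : (x, w) ∈ A'
      · simp only [if_pos h]; rw [hFMx, Finset.mem_coe, Finset.mem_filter]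
        exact ⟨h, Or.inl ⟨rfl, hwC⟩⟩
      · have h' : (w, x) ∈ A' := hor.resolve_left h
        simp only [if_neg h]; rw [hFMx, Finset.mem_coe, Finset.mem_filter]
        exact ⟨h', Or.inr ⟨rfl, hwC⟩⟩
    · intro w1 hw1 w2 hw2 heq
      simp only [hMx, Finset.coe_filter, Set.mem_setOf_eq] at hw1 hw2
      dsimp only at heq
      by_cases c1 : (x, w1) ∈ A' <;> by_cases c2 : (x, w2) ∈ A'
      · rw [if_pos c1, if_pos c2] at heq
        exact ((Prod.mk.injEq _ _ _ _).mp heq).2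
      · rw [if_pos c1, if_neg c2] at heq
        exact absurd ((Prod.mk.injEq _ _ _ _).mp heq).1.symm hw2.2.1
      · rw [if_neg c1, if_pos c2] at heq
        exact absurd ((Prod.mk.injEq _ _ _ _).mp heq).1 hw1.2.1
      · rw [if_neg c1, if_neg c2] at heq
        exact ((Prod.mk.injEq _ _ _ _).mp heq).1
  have hCyge : 1 ≤ Cy.card := Finset.card_pos.mpr ⟨y, hyCy⟩
  have hCxge : 1 ≤ Cx.card := Finset.card_pos.mpr ⟨x, hxCx⟩
  rw [hdy, hdx] at hdeg
  by_cases hcc : Cx = Cy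
  · -- x and y lie in the same strong component
    have hyx : Reach D y x := ((mem_Cx y).1 (hcc ▸ hyCy)).2
    have hSRc : (S \ Cy).card ≤ Rc.card := by
      apply Finset.card_le_card
      intro w hw
      simp only [Finset.mem_sdiff] at hw
      refine (mem_Rc w).2 (fun hr => ?_)
      exact hw.2 ((mem_Cy w).2 ⟨(mem_S w).1 hw.1, Relation.ReflTransGen.trans hr hxy⟩)
    have d1 : Disjoint (FMy ∪ FMx) FA := by
      rw [Finset.disjoint_left]
      intro a ha hfa
      simp only [hFA, Finset.mem_filter] at hfa
      obtain ⟨_, he1, hnr⟩ := hfa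
      simp only [Finset.mem_union, hFMy, hFMx, Finset.mem_filter] at ha
      rcases ha with ⟨_, (⟨e1, e2⟩ | ⟨e1, e2⟩)⟩ | ⟨_, (⟨e1, e2⟩ | ⟨e1, e2⟩)⟩
      · exact hnr ((mem_Cy a.2).1 e2).1
      · exact hnr (by rw [e1]; exact Relation.ReflTransGen.refl)
      · exact hxyne (by rw [← e1]; exact he1)
      · exact hnr (by rw [e1]; exact hyx)
    have d2 : Disjoint (FMy ∪ FMx) FB := by
      rw [Finset.disjoint_left]
      intro a ha hfb
      simp only [hFB, Finset.mem_filter] at hfb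
      obtain ⟨_, he2, hnr⟩ := hfb
      simp only [Finset.mem_union, hFMy, hFMx, Finset.mem_filter] at ha
      rcases ha with ⟨_, (⟨e1, e2⟩ | ⟨e1, e2⟩)⟩ | ⟨_, (⟨e1, e2⟩ | ⟨e1, e2⟩)⟩
      · exact hnr (by rw [e1]; exact hyx)
      · have : a.1 ∈ Cx := hcc ▸ e2
        exact hnr ((mem_Cx a.1).1 this).2
      · exact hnr (by rw [e1]; exact Relation.ReflTransGen.refl)
      · exact hnr ((mem_Cx a.1).1 e2).2
    have d3 : Disjoint FA FB := by
      rw [Finset.disjoint_left]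
      intro a ha hfb
      simp only [hFA, Finset.mem_filter] at ha
      simp only [hFB, Finset.mem_filter] at hfb
      exact ha.2.2 (by rw [hfb.2.1]; exact hyx)
    have hsum1 : (FMy ∪ FMx).card + FA.card + FB.card ≤ A'.card := by
      have e1 : ((FMy ∪ FMx) ∪ FA).card = (FMy ∪ FMx).card + FA.card :=
        Finset.card_union_of_disjoint d1
      have e2 : (((FMy ∪ FMx) ∪ FA) ∪ FB).card = ((FMy ∪ FMx) ∪ FA).card + FB.card :=
        Finset.card_union_of_disjoint (Finset.disjoint_union_left.mpr ⟨d2, d3⟩)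
      have e3 : ((FMy ∪ FMx) ∪ FA) ∪ FB ⊆ A' := by
        intro a ha
        simp only [Finset.mem_union, hFMy, hFMx, hFA, hFB, Finset.mem_filter] at ha
        tauto
      have := Finset.card_le_card e3
      omega
    have hG1 : FMy.card ≤ (FMy ∪ FMx).card := Finset.card_le_card Finset.subset_union_left
    have hG2 : FMx.card ≤ (FMy ∪ FMx).card := Finset.card_le_card Finset.subset_union_right
    have hCC : Cx.card = Cy.card := by rw [hcc]
    omega
  · -- x and y lie in different strong components
    have hdisjC : ∀ v, v ∈ Cx → v ∈ Cy → False := by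
      intro v h1 h2
      obtain ⟨hxv, hvx⟩ := (mem_Cx v).1 h1
      obtain ⟨hyv, hvy⟩ := (mem_Cy v).1 h2
      apply hcc
      apply Finset.ext
      intro w
      rw [mem_Cx w, mem_Cy w]
      constructor
      · rintro ⟨h3, h4⟩
        exact ⟨Relation.ReflTransGen.trans hyv (Relation.ReflTransGen.trans hvx h3),
               Relation.ReflTransGen.trans h4 (Relation.ReflTransGen.trans hxv hvy)⟩
      · rintro ⟨h3, h4⟩
        exact ⟨Relation.ReflTransGen.trans hxv (Relation.ReflTransGen.trans hvy h3),
               Relation.ReflTransGen.trans h4 (Relation.ReflTransGen.trans hyv hvx)⟩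
    have hnyx : ¬ Reach D y x := fun h => hdisjC y ((mem_Cx y).2 ⟨hxy, h⟩) hyCy
    have hSRc2 : (S \ Cy).card + Cy.card ≤ Rc.card := by
      rw [← Finset.card_union_of_disjoint Finset.sdiff_disjoint]
      apply Finset.card_le_card
      intro w hw
      refine (mem_Rc w).2 (fun hr => ?_)
      have hyw : Reach D y w := by
        simp only [Finset.mem_union, Finset.mem_sdiff] at hw
        rcases hw with ⟨h, _⟩ | h
        · exact (mem_S w).1 h
        · exact ((mem_Cy w).1 h).1
      exact hnyx (Relation.ReflTransGen.trans hyw hr)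
    have dyx : Disjoint FMy FMx := by
      rw [Finset.disjoint_left]
      intro a ha hb
      simp only [hFMy, Finset.mem_filter] at ha
      simp only [hFMx, Finset.mem_filter] at hb
      rcases ha.2 with ⟨e1, e2⟩ | ⟨e1, e2⟩ <;> rcases hb.2 with ⟨f1, f2⟩ | ⟨f1, f2⟩
      · exact hxyne (by rw [← f1]; exact e1)
      · exact hdisjC a.1 f2 (e1 ▸ hyCy)
      · exact hdisjC a.2 f2 (e1 ▸ hyCy)
      · exact hxyne (by rw [← f1]; exact e1)
    have d1 : Disjoint (FMy ∪ FMx) (FA \ FB) := by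
      rw [Finset.disjoint_left]
      intro a ha hfa
      have hfa' : a ∈ FA := (Finset.mem_sdiff.mp hfa).1
      simp only [hFA, Finset.mem_filter] at hfa'
      obtain ⟨_, he1, hnr⟩ := hfa'
      simp only [Finset.mem_union, hFMy, hFMx, Finset.mem_filter] at ha
      rcases ha with ⟨_, (⟨e1, e2⟩ | ⟨e1, e2⟩)⟩ | ⟨_, (⟨e1, e2⟩ | ⟨e1, e2⟩)⟩
      · exact hnr ((mem_Cy a.2).1 e2).1
      · exact hnr (by rw [e1]; exact Relation.ReflTransGen.refl)
      · exact hxyne (by rw [← e1]; exact he1)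
      · exact hdisjC a.1 e2 (he1 ▸ hyCy)
    have d2 : Disjoint (FMy ∪ FMx) FB := by
      rw [Finset.disjoint_left]
      intro a ha hfb
      simp only [hFB, Finset.mem_filter] at hfb
      obtain ⟨_, he2, hnr⟩ := hfb
      simp only [Finset.mem_union, hFMy, hFMx, Finset.mem_filter] at ha
      rcases ha with ⟨_, (⟨e1, e2⟩ | ⟨e1, e2⟩)⟩ | ⟨_, (⟨e1, e2⟩ | ⟨e1, e2⟩)⟩
      · exact hdisjC a.2 (he2 ▸ hxCx) e2
      · exact hxyne (by rw [← he2]; exact e1)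
      · exact hnr (by rw [e1]; exact Relation.ReflTransGen.refl)
      · exact hnr ((mem_Cx a.1).1 e2).2
    have d3 : Disjoint (FA \ FB) FB := Finset.sdiff_disjoint
    have hsum2 : FMy.card + FMx.card + (FA \ FB).card + FB.card ≤ A'.card := by
      have e0 : (FMy ∪ FMx).card = FMy.card + FMx.card := Finset.card_union_of_disjoint dyx
      have e1 : ((FMy ∪ FMx) ∪ (FA \ FB)).card = (FMy ∪ FMx).card + (FA \ FB).card :=
        Finset.card_union_of_disjoint d1
      have e2 : (((FMy ∪ FMx) ∪ (FA \ FB)) ∪ FB).card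
          = ((FMy ∪ FMx) ∪ (FA \ FB)).card + FB.card :=
        Finset.card_union_of_disjoint (Finset.disjoint_union_left.mpr ⟨d2, d3⟩)
      have e3 : ((FMy ∪ FMx) ∪ (FA \ FB)) ∪ FB ⊆ A' := by
        intro a ha
        simp only [Finset.mem_union, hFMy, hFMx, hFA, hFB, Finset.mem_sdiff,
          Finset.mem_filter] at ha
        tauto
      have := Finset.card_le_card e3
      omega
    have hFA2 : FA.card ≤ (FA \ FB).card + 1 := by
      have hsub : FA ⊆ (FA \ FB) ∪ {(y, x)} := by
        intro a ha
        simp only [Finset.mem_union, Finset.mem_sdiff, Finset.mem_singleton]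
        by_cases h : a ∈ FB
        · right
          simp only [hFA, Finset.mem_filter] at ha
          simp only [hFB, Finset.mem_filter] at h
          exact Prod.ext ha.2.1 h.2.1
        · exact Or.inl ⟨ha, h⟩
      calc FA.card ≤ ((FA \ FB) ∪ {(y, x)}).card := Finset.card_le_card hsub
      _ ≤ (FA \ FB).card + 1 := by
          have := Finset.card_union_le (FA \ FB) ({(y, x)} : Finset (V × V))
          simpa using this
    omega
end
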